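/- Let (A,B,X,ρ,σ,λ,H^0) be a covariant system with X a Hilbert A–B bimodule of finite type. Then the crossed product X⋊_λ H is a Hilbert (A⋊_ρ H)–(B⋊_σ H) bimodule of finite type, and its indices satisfy l-Ind[X⋊_λ H] = l-Ind[X]⋊_σ 1 and r-Ind[X⋊_λ H] = r-Ind[X]⋊_ρ 1. -/

import Mathlib

open scoped TensorProduct
open Filter Topology
set_option maxHeartbeats 1000000
set_option linter.unusedSectionVars false
set_option synthInstance.maxHeartbeats 400000
noncomputable section
namespace SMEPaper
universe u

/-! ### Generalities on tensor products with a finite dimensional C*-algebra -/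

/-- Contraction of the right tensor factor against a linear functional:
`appRight f (m ⊗ c) = f c • m`. -/
def appRight {M C : Type*} [AddCommGroup M] [Module ℂ M] [AddCommGroup C] [Module ℂ C]
    (f : C →ₗ[ℂ] ℂ) : M ⊗[ℂ] C →ₗ[ℂ] M :=
  (TensorProduct.rid ℂ M).toLinearMap ∘ₗ TensorProduct.map LinearMap.id f

/-- The `i`-th coordinate, with respect to the canonical finite basis of `C`, of an
element of `M ⊗[ℂ] C`. -/
def tcoord {M C : Type*} [AddCommGroup M] [Module ℂ M] [AddCommGroup C] [Module ℂ C]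
    [FiniteDimensional ℂ C] (i : Fin (Module.finrank ℂ C)) : M ⊗[ℂ] C →ₗ[ℂ] M :=
  appRight ((Module.finBasis ℂ C).coord i)

/-- The star operation on `M ⊗[ℂ] C` (`C` finite dimensional) where the star operation on the
first factor is supplied as a function: on simple tensors, `m ⊗ c ↦ sM m ⊗ star c`. -/
def tstarWith {M C : Type*} [AddCommGroup M] [Module ℂ M] [Ring C] [Algebra ℂ C]
    [StarRing C] [FiniteDimensional ℂ C] (sM : M → M) (t : M ⊗[ℂ] C) : M ⊗[ℂ] C :=
  ∑ i, sM (tcoord i t) ⊗ₜ star (Module.finBasis ℂ C i)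

/-- Combination of an operation on the first factors and an operation on the second (finite
dimensional) factors to an operation on tensor products: on simple tensors,
`tmix op cop (p ⊗ c) (q ⊗ d) = op p q ⊗ cop c d`. -/
def tmix {P Q R C : Type*} [AddCommGroup P] [Module ℂ P] [AddCommGroup Q] [Module ℂ Q]
    [AddCommGroup R] [Module ℂ R] [Ring C] [Algebra ℂ C] [FiniteDimensional ℂ C]
    (op : P → Q → R) (cop : C → C → C) (s : P ⊗[ℂ] C) (t : Q ⊗[ℂ] C) : R ⊗[ℂ] C :=
  ∑ i, ∑ j,
    op (tcoord i s) (tcoord j t) ⊗ₜ cop (Module.finBasis ℂ C i) (Module.finBasis ℂ C j)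

/-- The operation on tensor products induced by an operation on the first factors (and
multiplication in the second): `tact op (p ⊗ c) (q ⊗ d) = op p q ⊗ (c * d)`. -/
def tact {P Q R C : Type*} [AddCommGroup P] [Module ℂ P] [AddCommGroup Q] [Module ℂ Q]
    [AddCommGroup R] [Module ℂ R] [Ring C] [Algebra ℂ C] [FiniteDimensional ℂ C]
    (op : P → Q → R) : P ⊗[ℂ] C → Q ⊗[ℂ] C → R ⊗[ℂ] C :=
  tmix op (· * ·)

/-- The left inner product on `X ⊗ C` induced by a left (`A`-valued) inner product on `X`:
`(x ⊗ c), (y ⊗ d) ↦ inn x y ⊗ (c * star d)`. -/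
def tinnL {X A C : Type*} [AddCommGroup X] [Module ℂ X] [AddCommGroup A] [Module ℂ A]
    [Ring C] [Algebra ℂ C] [StarRing C] [FiniteDimensional ℂ C]
    (inn : X → X → A) : X ⊗[ℂ] C → X ⊗[ℂ] C → A ⊗[ℂ] C :=
  tmix inn (fun c d => c * star d)

/-- The right inner product on `X ⊗ C` induced by a right (`B`-valued) inner product on `X`:
`(x ⊗ c), (y ⊗ d) ↦ inn x y ⊗ (star c * d)`. -/
def tinnR {X B C : Type*} [AddCommGroup X] [Module ℂ X] [AddCommGroup B] [Module ℂ B]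
    [Ring C] [Algebra ℂ C] [StarRing C] [FiniteDimensional ℂ C]
    (inn : X → X → B) : X ⊗[ℂ] C → X ⊗[ℂ] C → B ⊗[ℂ] C :=
  tmix inn (fun c d => star c * d)

/-! ### Finite dimensional C*-Hopf algebras -/

/-- The data and axioms of a finite dimensional C*-Hopf algebra structure on the finite
dimensional C*-algebra `H0`: a comultiplication, counit and antipode satisfying the Hopf
algebra axioms, compatibly with the ⋆-structure. -/
structure HopfAlgData (H0 : Type u) [Ring H0] [Algebra ℂ H0] [StarRing H0]
    [StarModule ℂ H0] [FiniteDimensional ℂ H0] where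
  comul : H0 →ₐ[ℂ] H0 ⊗[ℂ] H0
  counit : H0 →ₐ[ℂ] ℂ
  antipode : H0 →ₗ[ℂ] H0
  coassoc : ∀ h, TensorProduct.map comul.toLinearMap LinearMap.id (comul h)
      = (TensorProduct.assoc ℂ H0 H0 H0).symm
          (TensorProduct.map LinearMap.id comul.toLinearMap (comul h))
  counit_left : ∀ h,
      (TensorProduct.lid ℂ H0) (TensorProduct.map counit.toLinearMap LinearMap.id (comul h)) = h
  counit_right : ∀ h, appRight counit.toLinearMap (comul h) = h
  antipode_left : ∀ (h : H0) (n : ℕ) (h1 h2 : Fin n → H0),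
      comul h = ∑ i, h1 i ⊗ₜ h2 i → ∑ i, antipode (h1 i) * h2 i = counit h • 1
  antipode_right : ∀ (h : H0) (n : ℕ) (h1 h2 : Fin n → H0),
      comul h = ∑ i, h1 i ⊗ₜ h2 i → ∑ i, h1 i * antipode (h2 i) = counit h • 1
  comul_star : ∀ h, comul (star h) = tstarWith star (comul h)
  counit_star : ∀ h, counit (star h) = starRingEnd ℂ (counit h)

/-! ### Coactions on C*-algebras -/

section Coaction
variable {H0 : Type u} [Ring H0] [Algebra ℂ H0] [StarRing H0] [StarModule ℂ H0]
  [FiniteDimensional ℂ H0]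
variable {A B X : Type u} [Ring A] [Algebra ℂ A] [StarRing A]
  [Ring B] [Algebra ℂ B] [StarRing B] [AddCommGroup X] [Module ℂ X]

/-- `ρ : A → A ⊗ H0` is a weak coaction of `H0` (with counit `ε0`) on `A`:
a unital ⋆-homomorphism with `(id ⊗ ε0) ∘ ρ = id`. -/
structure IsWeakCoaction (ε0 : H0 →ₗ[ℂ] ℂ) (ρ : A →ₗ[ℂ] A ⊗[ℂ] H0) : Prop where
  map_one : ρ 1 = 1
  map_mul : ∀ a b, ρ (a * b) = ρ a * ρ b
  map_star : ∀ a, ρ (star a) = tstarWith star (ρ a)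
  counital : ∀ a, appRight ε0 (ρ a) = a

/-- `ρ : A → A ⊗ H0` is a coaction of `H0` (with comultiplication `Δ0`, counit `ε0`) on `A`:
a weak coaction with `(ρ ⊗ id) ∘ ρ = (id ⊗ Δ0) ∘ ρ`. -/
structure IsCoaction (Δ0 : H0 →ₗ[ℂ] H0 ⊗[ℂ] H0) (ε0 : H0 →ₗ[ℂ] ℂ)
    (ρ : A →ₗ[ℂ] A ⊗[ℂ] H0) extends IsWeakCoaction ε0 ρ : Prop where
  coassoc : ∀ a, TensorProduct.map ρ LinearMap.id (ρ a)
      = (TensorProduct.assoc ℂ A H0 H0).symm (TensorProduct.map LinearMap.id Δ0 (ρ a))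

/-- The pair `(ρ, u)` is a twisted coaction of `H0` on `A`. -/
structure IsTwistedCoaction (Δ0 : H0 →ₗ[ℂ] H0 ⊗[ℂ] H0) (ε0 : H0 →ₗ[ℂ] ℂ)
    (ρ : A →ₗ[ℂ] A ⊗[ℂ] H0) (u : (A ⊗[ℂ] H0) ⊗[ℂ] H0)
    extends IsWeakCoaction ε0 ρ : Prop where
  unitary_left : u * tstarWith (tstarWith star) u = 1
  unitary_right : tstarWith (tstarWith star) u * u = 1
  twisted_coassoc : ∀ a, TensorProduct.map ρ LinearMap.id (ρ a)
      = u * ((TensorProduct.assoc ℂ A H0 H0).symm (TensorProduct.map LinearMap.id Δ0 (ρ a)))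
        * tstarWith (tstarWith star) u
  cocycle : (u ⊗ₜ (1 : H0))
        * TensorProduct.map ((TensorProduct.assoc ℂ A H0 H0).symm.toLinearMap
            ∘ₗ TensorProduct.map LinearMap.id Δ0) LinearMap.id u
      = TensorProduct.map (TensorProduct.map ρ LinearMap.id) LinearMap.id u
        * (TensorProduct.assoc ℂ (A ⊗[ℂ] H0) H0 H0).symm
            (TensorProduct.map LinearMap.id Δ0 u)
  counit_mid : ∀ h : Module.Dual ℂ H0, appRight h (appRight ε0 u) = h 1 • (1 : A)
  counit_out : ∀ h : Module.Dual ℂ H0, appRight ε0 (appRight h u) = h 1 • (1 : A)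

/-- The trivial coaction `a ↦ a ⊗ 1` of `H0` on `A`. -/
def trivialCoaction (H0 : Type u) [Ring H0] [Algebra ℂ H0] (A : Type u) [Ring A]
    [Algebra ℂ A] : A →ₗ[ℂ] A ⊗[ℂ] H0 :=
  (TensorProduct.mk ℂ A H0).flip 1

end Coaction

/-! ### Hilbert bimodules -/

/-- A (pre-)Hilbert `A`–`B` bimodule structure on `X`: a bimodule with a left `A`-valued and a
right `B`-valued inner product, compatible with the module actions, with the appropriate
(conjugate-)linearity, symmetry, positivity and definiteness properties. -/
structure Bimod (A B X : Type u) [Ring A] [Algebra ℂ A] [StarRing A]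
    [Ring B] [Algebra ℂ B] [StarRing B] [AddCommGroup X] [Module ℂ X] where
  ls : A → X → X
  rs : X → B → X
  linn : X → X → A
  rinn : X → X → B
  ls_one : ∀ x, ls 1 x = x
  ls_mul : ∀ a a' x, ls (a * a') x = ls a (ls a' x)
  ls_add : ∀ a a' x, ls (a + a') x = ls a x + ls a' x
  ls_add' : ∀ a x y, ls a (x + y) = ls a x + ls a y
  ls_smul : ∀ (c : ℂ) a x, ls (c • a) x = c • ls a x
  ls_smul' : ∀ (c : ℂ) a x, ls a (c • x) = c • ls a x
  rs_one : ∀ x, rs x 1 = x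
  rs_mul : ∀ x b b', rs x (b * b') = rs (rs x b) b'
  rs_add : ∀ x b b', rs x (b + b') = rs x b + rs x b'
  rs_add' : ∀ x y b, rs (x + y) b = rs x b + rs y b
  rs_smul : ∀ (c : ℂ) x b, rs x (c • b) = c • rs x b
  rs_smul' : ∀ (c : ℂ) x b, rs (c • x) b = c • rs x b
  ls_rs : ∀ a x b, ls a (rs x b) = rs (ls a x) b
  linn_add_left : ∀ x y z, linn (x + y) z = linn x z + linn y z
  linn_add_right : ∀ x y z, linn x (y + z) = linn x y + linn x z
  rinn_add_left : ∀ x y z, rinn (x + y) z = rinn x z + rinn y z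
  rinn_add_right : ∀ x y z, rinn x (y + z) = rinn x y + rinn x z
  linn_smul_left : ∀ (c : ℂ) x y, linn (c • x) y = c • linn x y
  linn_smul_right : ∀ (c : ℂ) x y, linn x (c • y) = starRingEnd ℂ c • linn x y
  rinn_smul_left : ∀ (c : ℂ) x y, rinn (c • x) y = starRingEnd ℂ c • rinn x y
  rinn_smul_right : ∀ (c : ℂ) x y, rinn x (c • y) = c • rinn x y
  linn_star : ∀ x y, star (linn x y) = linn y x
  rinn_star : ∀ x y, star (rinn x y) = rinn y x
  linn_ls : ∀ a x y, linn (ls a x) y = a * linn x y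
  rinn_rs : ∀ x y b, rinn x (rs y b) = rinn x y * b
  linn_rs : ∀ x y b, linn (rs x b) y = linn x (rs y (star b))
  rinn_ls : ∀ a x y, rinn (ls a x) y = rinn x (ls (star a) y)
  linn_pos : ∀ x, ∃ a, linn x x = star a * a
  rinn_pos : ∀ x, ∃ b, rinn x x = star b * b
  rinn_def : ∀ x, rinn x x = 0 → x = 0

section BimodDefs
variable {A B X : Type u} [Ring A] [Algebra ℂ A] [StarRing A]
    [Ring B] [Algebra ℂ B] [StarRing B] [AddCommGroup X] [Module ℂ X]

/-- A Hilbert bimodule is of finite type if it admits a finite right basis and a finite left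
basis in the sense of Kajiwara–Watatani. -/
def Bimod.FiniteType (bm : Bimod A B X) : Prop :=
  (∃ (n : ℕ) (u : Fin n → X), ∀ x, ∑ i, bm.rs (u i) (bm.rinn (u i) x) = x) ∧
  (∃ (m : ℕ) (v : Fin m → X), ∀ x, ∑ j, bm.ls (bm.linn x (v j)) (v j) = x)

/-- An equivalence bimodule: both inner products are full and the associativity condition
`_A⟨x,y⟩ • z = x • ⟨y,z⟩_B` holds. -/
def Bimod.IsEquivalence (bm : Bimod A B X) : Prop :=
  (∀ x y z, bm.ls (bm.linn x y) z = bm.rs x (bm.rinn y z)) ∧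
  Submodule.span ℂ (Set.range fun p : X × X => bm.linn p.1 p.2) = ⊤ ∧
  Submodule.span ℂ (Set.range fun p : X × X => bm.rinn p.1 p.2) = ⊤

end BimodDefs

/-! ### Coactions on Hilbert bimodules, covariant systems, strong Morita equivalence -/

section BimodCoaction
variable {H0 : Type u} [Ring H0] [Algebra ℂ H0] [StarRing H0] [StarModule ℂ H0]
  [FiniteDimensional ℂ H0]
variable {A B X : Type u} [Ring A] [Algebra ℂ A] [StarRing A]
  [Ring B] [Algebra ℂ B] [StarRing B] [AddCommGroup X] [Module ℂ X]

/-- `(A, B, X, ρ, σ, λ, H0)` is a weak covariant system: `lam` is a weak coaction of `H0` on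
the Hilbert `A`–`B` bimodule `X` with respect to `(A, B, ρ, σ)`. -/
structure IsWeakCoactionBimod (ε0 : H0 →ₗ[ℂ] ℂ) (bm : Bimod A B X)
    (ρ : A →ₗ[ℂ] A ⊗[ℂ] H0) (σ : B →ₗ[ℂ] B ⊗[ℂ] H0)
    (lam : X →ₗ[ℂ] X ⊗[ℂ] H0) : Prop where
  ls_compat : ∀ a x, lam (bm.ls a x) = tact bm.ls (ρ a) (lam x)
  rs_compat : ∀ x b, lam (bm.rs x b) = tact bm.rs (lam x) (σ b)
  linn_compat : ∀ x y, ρ (bm.linn x y) = tinnL bm.linn (lam x) (lam y)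
  rinn_compat : ∀ x y, σ (bm.rinn x y) = tinnR bm.rinn (lam x) (lam y)
  counital : ∀ x, appRight ε0 (lam x) = x

/-- `(A, B, X, ρ, σ, λ, H0)` is a covariant system: `lam` is a coaction of `H0` on the
Hilbert `A`–`B` bimodule `X` with respect to `(A, B, ρ, σ)`. -/
structure IsCoactionBimod (Δ0 : H0 →ₗ[ℂ] H0 ⊗[ℂ] H0) (ε0 : H0 →ₗ[ℂ] ℂ) (bm : Bimod A B X)
    (ρ : A →ₗ[ℂ] A ⊗[ℂ] H0) (σ : B →ₗ[ℂ] B ⊗[ℂ] H0) (lam : X →ₗ[ℂ] X ⊗[ℂ] H0)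
    extends IsWeakCoactionBimod ε0 bm ρ σ lam : Prop where
  coassoc : ∀ x, TensorProduct.map lam LinearMap.id (lam x)
      = (TensorProduct.assoc ℂ X H0 H0).symm (TensorProduct.map LinearMap.id Δ0 (lam x))

/-- `(A, B, X, ρ, u, σ, v, λ, H0)` is a twisted covariant system: `lam` is a twisted coaction
of `H0` on the Hilbert `A`–`B` bimodule `X` with respect to `(A, B, ρ, u, σ, v)`. -/
structure IsTwistedCoactionBimod (Δ0 : H0 →ₗ[ℂ] H0 ⊗[ℂ] H0) (ε0 : H0 →ₗ[ℂ] ℂ)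
    (bm : Bimod A B X) (ρ : A →ₗ[ℂ] A ⊗[ℂ] H0) (u : (A ⊗[ℂ] H0) ⊗[ℂ] H0)
    (σ : B →ₗ[ℂ] B ⊗[ℂ] H0) (v : (B ⊗[ℂ] H0) ⊗[ℂ] H0) (lam : X →ₗ[ℂ] X ⊗[ℂ] H0)
    extends IsWeakCoactionBimod ε0 bm ρ σ lam : Prop where
  twisted : ∀ x, TensorProduct.map lam LinearMap.id (lam x)
      = tact (tact bm.rs)
          (tact (tact bm.ls) u
            ((TensorProduct.assoc ℂ X H0 H0).symm (TensorProduct.map LinearMap.id Δ0 (lam x))))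
          (tstarWith (tstarWith star) v)

/-- Two weak coactions `ρ` (on `A`) and `σ` (on `B`) of `H0` are strongly Morita equivalent
if there are an `A`–`B` equivalence bimodule `X` and a weak coaction of `H0` on `X` with
respect to `(A, B, ρ, σ)`. -/
def WeakSME (ε0 : H0 →ₗ[ℂ] ℂ) (ρ : A →ₗ[ℂ] A ⊗[ℂ] H0) (σ : B →ₗ[ℂ] B ⊗[ℂ] H0) : Prop :=
  ∃ (X : Type u) (_ : AddCommGroup X) (_ : Module ℂ X) (bm : Bimod A B X),
    bm.IsEquivalence ∧ ∃ lam : X →ₗ[ℂ] X ⊗[ℂ] H0, IsWeakCoactionBimod ε0 bm ρ σ lam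

/-- Two coactions `ρ` (on `A`) and `σ` (on `B`) of `H0` are strongly Morita equivalent if
there are an `A`–`B` equivalence bimodule `X` and a coaction of `H0` on `X` with respect to
`(A, B, ρ, σ)`. -/
def CoactSME (Δ0 : H0 →ₗ[ℂ] H0 ⊗[ℂ] H0) (ε0 : H0 →ₗ[ℂ] ℂ)
    (ρ : A →ₗ[ℂ] A ⊗[ℂ] H0) (σ : B →ₗ[ℂ] B ⊗[ℂ] H0) : Prop :=
  ∃ (X : Type u) (_ : AddCommGroup X) (_ : Module ℂ X) (bm : Bimod A B X),
    bm.IsEquivalence ∧ ∃ lam : X →ₗ[ℂ] X ⊗[ℂ] H0, IsCoactionBimod Δ0 ε0 bm ρ σ lam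

/-- Two twisted coactions `(ρ, u)` (on `A`) and `(σ, v)` (on `B`) of `H0` are strongly Morita
equivalent if there are an `A`–`B` equivalence bimodule `X` and a twisted coaction of `H0` on
`X` with respect to `(A, B, ρ, u, σ, v)`. -/
def TwistedSME (Δ0 : H0 →ₗ[ℂ] H0 ⊗[ℂ] H0) (ε0 : H0 →ₗ[ℂ] ℂ)
    (ρ : A →ₗ[ℂ] A ⊗[ℂ] H0) (u : (A ⊗[ℂ] H0) ⊗[ℂ] H0)
    (σ : B →ₗ[ℂ] B ⊗[ℂ] H0) (v : (B ⊗[ℂ] H0) ⊗[ℂ] H0) : Prop :=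
  ∃ (X : Type u) (_ : AddCommGroup X) (_ : Module ℂ X) (bm : Bimod A B X),
    bm.IsEquivalence ∧
      ∃ lam : X →ₗ[ℂ] X ⊗[ℂ] H0, IsTwistedCoactionBimod Δ0 ε0 bm ρ u σ v lam

end BimodCoaction
/-! ### A finite dimensional C*-Hopf algebra together with its dual -/

/-- A finite dimensional C*-Hopf algebra `H` together with its dual C*-Hopf algebra `H0`:
Hopf algebra structures on both, a perfect pairing compatible with all the structure, and
the distinguished (Haar) projections `e ∈ H` and `τ ∈ H0`. -/
structure HopfPairData (H H0 : Type u) [Ring H] [Algebra ℂ H] [StarRing H] [StarModule ℂ H]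
    [FiniteDimensional ℂ H] [Ring H0] [Algebra ℂ H0] [StarRing H0] [StarModule ℂ H0]
    [FiniteDimensional ℂ H0] where
  dH : HopfAlgData H
  dH0 : HopfAlgData H0
  pair : H →ₗ[ℂ] H0 →ₗ[ℂ] ℂ
  perfect : Function.Bijective fun h => pair h
  perfect' : Function.Bijective fun φ => pair.flip φ
  pair_mul_left : ∀ (h l : H) (φ : H0) (n : ℕ) (φ1 φ2 : Fin n → H0),
      dH0.comul φ = ∑ i, φ1 i ⊗ₜ φ2 i →
      pair (h * l) φ = ∑ i, pair h (φ1 i) * pair l (φ2 i)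
  pair_mul_right : ∀ (h : H) (φ ψ : H0) (n : ℕ) (h1 h2 : Fin n → H),
      dH.comul h = ∑ i, h1 i ⊗ₜ h2 i →
      pair h (φ * ψ) = ∑ i, pair (h1 i) φ * pair (h2 i) ψ
  pair_one_left : ∀ φ, pair 1 φ = dH0.counit φ
  pair_one_right : ∀ h, pair h 1 = dH.counit h
  pair_antipode : ∀ h φ, pair (dH.antipode h) φ = pair h (dH0.antipode φ)
  pair_star : ∀ h φ, pair (star h) φ = starRingEnd ℂ (pair h (star (dH0.antipode φ)))
  pair_star' : ∀ h φ, pair h (star φ) = starRingEnd ℂ (pair (star (dH.antipode h)) φ)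
  haar : H
  haar_star : star haar = haar
  haar_idem : haar * haar = haar
  haar_absorb : ∀ h, h * haar = dH.counit h • haar
  haar_absorb' : ∀ h, haar * h = dH.counit h • haar
  counit_haar : dH.counit haar = 1
  haar0 : H0
  haar0_star : star haar0 = haar0
  haar0_idem : haar0 * haar0 = haar0
  haar0_absorb : ∀ φ, φ * haar0 = dH0.counit φ • haar0
  haar0_absorb' : ∀ φ, haar0 * φ = dH0.counit φ • haar0
  counit_haar0 : dH0.counit haar0 = 1

section DualAct
variable {H H0 : Type u} [Ring H] [Algebra ℂ H] [StarRing H] [StarModule ℂ H]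
    [FiniteDimensional ℂ H] [Ring H0] [Algebra ℂ H0] [StarRing H0] [StarModule ℂ H0]
    [FiniteDimensional ℂ H0]

/-- The action of `h ∈ H` on `M` induced by a coaction-type map `ρ : M → M ⊗ H0` of the
dual `H0`:  `h ·_ρ m = (id ⊗ h)(ρ m)`. -/
def coactAct {M : Type u} [AddCommGroup M] [Module ℂ M] (dp : HopfPairData H H0)
    (ρ : M →ₗ[ℂ] M ⊗[ℂ] H0) (h : H) (m : M) : M :=
  appRight (dp.pair h) (ρ m)

end DualAct

/-! ### Abstract unital C*-algebra structures on a complex vector space -/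

/-- The structure of a unital C*-algebra on a complex vector space `E`, given by raw data:
a bilinear multiplication, a unit, an involution and a C*-norm. (This is used to present
crossed products, whose underlying vector space is a tensor product.) -/
structure RawCStarAlg (E : Type u) [AddCommGroup E] [Module ℂ E] where
  mul : E →ₗ[ℂ] E →ₗ[ℂ] E
  one : E
  star' : E → E
  cnorm : E → ℝ
  mul_assoc' : ∀ s t r, mul (mul s t) r = mul s (mul t r)
  one_mul' : ∀ s, mul one s = s
  mul_one' : ∀ s, mul s one = s
  star_add' : ∀ s t, star' (s + t) = star' s + star' t
  star_smul' : ∀ (c : ℂ) s, star' (c • s) = starRingEnd ℂ c • star' s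
  star_invol : ∀ s, star' (star' s) = s
  star_mul'' : ∀ s t, star' (mul s t) = mul (star' t) (star' s)
  norm_nonneg' : ∀ s, 0 ≤ cnorm s
  norm_def : ∀ s, cnorm s = 0 → s = 0
  norm_add' : ∀ s t, cnorm (s + t) ≤ cnorm s + cnorm t
  norm_smul' : ∀ (c : ℂ) s, cnorm (c • s) = ‖c‖ * cnorm s
  norm_mul' : ∀ s t, cnorm (mul s t) ≤ cnorm s * cnorm t
  norm_star' : ∀ s, cnorm (star' s) = cnorm s
  norm_cstar : ∀ s, cnorm (mul (star' s) s) = cnorm s * cnorm s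

namespace RawCStarAlg
variable {E : Type u} [AddCommGroup E] [Module ℂ E] (ra : RawCStarAlg E)

/-- The ring structure on `E` determined by a `RawCStarAlg`. -/
def ringStr : Ring E :=
  { (inferInstance : AddCommGroup E) with
    mul := fun s t => ra.mul s t
    one := ra.one
    mul_assoc := ra.mul_assoc'
    one_mul := ra.one_mul'
    mul_one := ra.mul_one'
    left_distrib := fun s t r => map_add (ra.mul s) t r
    right_distrib := fun s t r => by
      show ra.mul (s + t) r = ra.mul s r + ra.mul t r
      rw [map_add, LinearMap.add_apply]
    zero_mul := fun s => by
      show ra.mul 0 s = 0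
      rw [map_zero, LinearMap.zero_apply]
    mul_zero := fun s => by
      show ra.mul s 0 = 0
      rw [map_zero] }

/-- The `ℂ`-algebra structure on `E` determined by a `RawCStarAlg`. -/
def algStr : @Algebra ℂ E _ (ra.ringStr.toSemiring) :=
  let m : Module ℂ E := inferInstance
  letI := ra.ringStr
  @Algebra.ofModule ℂ E _ _ m
    (fun c s t => by
      show ra.mul (c • s) t = c • ra.mul s t
      rw [map_smul] <;> rfl)
    (fun c s t => by
      show ra.mul s (c • t) = c • ra.mul s t
      rw [map_smul])

/-- The star ring structure on `E` determined by a `RawCStarAlg`. -/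
def starStr : @StarRing E (ra.ringStr.toNonUnitalNonAssocSemiring) :=
  letI := ra.ringStr
  { star := ra.star'
    star_involutive := ra.star_invol
    star_mul := ra.star_mul''
    star_add := ra.star_add' }

end RawCStarAlg

/-! ### Crossed products by finite dimensional C*-Hopf algebras -/

section CrossedDefs
variable {H H0 : Type u} [Ring H] [Algebra ℂ H] [StarRing H] [StarModule ℂ H]
    [FiniteDimensional ℂ H] [Ring H0] [Algebra ℂ H0] [StarRing H0] [StarModule ℂ H0]
    [FiniteDimensional ℂ H0]

/-- Iterated comultiplication `Δ² = (Δ ⊗ id) ∘ Δ`. -/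
def comul2 (d : HopfAlgData H) : H →ₗ[ℂ] (H ⊗[ℂ] H) ⊗[ℂ] H :=
  TensorProduct.map d.comul.toLinearMap LinearMap.id ∘ₗ d.comul.toLinearMap

/-- Iterated comultiplication `Δ³`. -/
def comul3 (d : HopfAlgData H) : H →ₗ[ℂ] ((H ⊗[ℂ] H) ⊗[ℂ] H) ⊗[ℂ] H :=
  TensorProduct.map (TensorProduct.map d.comul.toLinearMap LinearMap.id) LinearMap.id
    ∘ₗ comul2 d

/-- Iterated comultiplication `Δ⁴`. -/
def comul4 (d : HopfAlgData H) :
    H →ₗ[ℂ] (((H ⊗[ℂ] H) ⊗[ℂ] H) ⊗[ℂ] H) ⊗[ℂ] H :=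
  TensorProduct.map
    (TensorProduct.map (TensorProduct.map d.comul.toLinearMap LinearMap.id) LinearMap.id)
    LinearMap.id ∘ₗ comul3 d

variable {A : Type u} [Ring A] [Algebra ℂ A] [StarRing A]

/-- `û(h, l) = (id ⊗ h ⊗ l)(u)` for `u ∈ A ⊗ H0 ⊗ H0` and `h, l ∈ H`. -/
def uhat (dp : HopfPairData H H0) (u : (A ⊗[ℂ] H0) ⊗[ℂ] H0) (h l : H) : A :=
  appRight (dp.pair h) (appRight (dp.pair l) u)

/-- A realization of the crossed product `A ⋊_ρ H` of a coaction `ρ` of `H0` on `A`: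
a unital C*-algebra structure on the vector space `A ⊗ H` satisfying
`(a ⋊ h)(b ⋊ l) = a[h₍₁₎ ·_ρ b] ⋊ h₍₂₎ l` and `(a ⋊ h)* = [h₍₁₎* ·_ρ a*] ⋊ h₍₂₎*`. -/
structure CrossedAlg (dp : HopfPairData H H0) (ρ : A →ₗ[ℂ] A ⊗[ℂ] H0)
    extends RawCStarAlg (A ⊗[ℂ] H) where
  one_def : one = (1 : A) ⊗ₜ (1 : H)
  mul_char : ∀ (a b : A) (h l : H) (n : ℕ) (h1 h2 : Fin n → H),
      dp.dH.comul h = ∑ i, h1 i ⊗ₜ h2 i →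
      mul (a ⊗ₜ h) (b ⊗ₜ l) = ∑ i, (a * coactAct dp ρ (h1 i) b) ⊗ₜ (h2 i * l)
  star_char : ∀ (a : A) (h : H) (n : ℕ) (h1 h2 : Fin n → H),
      dp.dH.comul h = ∑ i, h1 i ⊗ₜ h2 i →
      star' (a ⊗ₜ h) = ∑ i, coactAct dp ρ (star (h1 i)) (star a) ⊗ₜ star (h2 i)

/-- A realization of the twisted crossed product `A ⋊_{ρ,u} H` of a twisted coaction
`(ρ, u)` of `H0` on `A`: a unital C*-algebra structure on the vector space `A ⊗ H` with the
canonical involution, satisfying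
`(a ⋊ h)(b ⋊ l) = a[h₍₁₎ ·_{ρ,u} b]û(h₍₂₎,l₍₁₎) ⋊ h₍₃₎l₍₂₎`. -/
structure TwCrossedAlg (dp : HopfPairData H H0) (ρ : A →ₗ[ℂ] A ⊗[ℂ] H0)
    (u : (A ⊗[ℂ] H0) ⊗[ℂ] H0) extends RawCStarAlg (A ⊗[ℂ] H) where
  one_def : one = (1 : A) ⊗ₜ (1 : H)
  mul_char : ∀ (a b : A) (h l : H) (n : ℕ) (h1 h2 h3 : Fin n → H)
      (m : ℕ) (l1 l2 : Fin m → H),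
      comul2 dp.dH h = ∑ i, (h1 i ⊗ₜ h2 i) ⊗ₜ h3 i →
      dp.dH.comul l = ∑ j, l1 j ⊗ₜ l2 j →
      mul (a ⊗ₜ h) (b ⊗ₜ l)
        = ∑ i, ∑ j,
            (a * coactAct dp ρ (h1 i) b * uhat dp u (h2 i) (l1 j)) ⊗ₜ (h3 i * l2 j)

/-- The dual coaction `ρ̂(a ⋊ h) = (a ⋊ h₍₁₎) ⊗ h₍₂₎` of `H` on the crossed product
`A ⋊ H` (whose underlying vector space is `A ⊗ H`). -/
def dualCoact (d : HopfAlgData H) (A : Type u) [AddCommGroup A] [Module ℂ A] :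
    (A ⊗[ℂ] H) →ₗ[ℂ] (A ⊗[ℂ] H) ⊗[ℂ] H :=
  (TensorProduct.assoc ℂ A H H).symm.toLinearMap
    ∘ₗ TensorProduct.map LinearMap.id d.comul.toLinearMap

end CrossedDefs

/-! ### Hilbert bimodules over raw C*-algebra structures -/

section Over
variable {E F Y : Type u} [AddCommGroup E] [Module ℂ E] [AddCommGroup F] [Module ℂ F]
  [AddCommGroup Y] [Module ℂ Y]

/-- A Hilbert bimodule structure on `Y` over two raw C*-algebra structures (on the complex
vector spaces `E` and `F`); this is the analogue of `Bimod` used when the algebras are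
crossed products presented on tensor product vector spaces. -/
structure BimodOver (raE : RawCStarAlg E) (raF : RawCStarAlg F)
    (Y : Type u) [AddCommGroup Y] [Module ℂ Y] where
  ls : E → Y → Y
  rs : Y → F → Y
  linn : Y → Y → E
  rinn : Y → Y → F
  ls_one : ∀ y, ls raE.one y = y
  ls_mul : ∀ e e' y, ls (raE.mul e e') y = ls e (ls e' y)
  ls_add : ∀ e e' y, ls (e + e') y = ls e y + ls e' y
  ls_add' : ∀ e y y', ls e (y + y') = ls e y + ls e y'
  ls_smul : ∀ (c : ℂ) e y, ls (c • e) y = c • ls e y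
  ls_smul' : ∀ (c : ℂ) e y, ls e (c • y) = c • ls e y
  rs_one : ∀ y, rs y raF.one = y
  rs_mul : ∀ y f f', rs y (raF.mul f f') = rs (rs y f) f'
  rs_add : ∀ y f f', rs y (f + f') = rs y f + rs y f'
  rs_add' : ∀ y y' f, rs (y + y') f = rs y f + rs y' f
  rs_smul : ∀ (c : ℂ) y f, rs y (c • f) = c • rs y f
  rs_smul' : ∀ (c : ℂ) y f, rs (c • y) f = c • rs y f
  ls_rs : ∀ e y f, ls e (rs y f) = rs (ls e y) f
  linn_add_left : ∀ x y z, linn (x + y) z = linn x z + linn y z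
  linn_add_right : ∀ x y z, linn x (y + z) = linn x y + linn x z
  rinn_add_left : ∀ x y z, rinn (x + y) z = rinn x z + rinn y z
  rinn_add_right : ∀ x y z, rinn x (y + z) = rinn x y + rinn x z
  linn_smul_left : ∀ (c : ℂ) x y, linn (c • x) y = c • linn x y
  linn_smul_right : ∀ (c : ℂ) x y, linn x (c • y) = starRingEnd ℂ c • linn x y
  rinn_smul_left : ∀ (c : ℂ) x y, rinn (c • x) y = starRingEnd ℂ c • rinn x y
  rinn_smul_right : ∀ (c : ℂ) x y, rinn x (c • y) = c • rinn x y
  linn_star : ∀ x y, raE.star' (linn x y) = linn y x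
  rinn_star : ∀ x y, raF.star' (rinn x y) = rinn y x
  linn_ls : ∀ e x y, linn (ls e x) y = raE.mul e (linn x y)
  rinn_rs : ∀ x y f, rinn x (rs y f) = raF.mul (rinn x y) f
  linn_rs : ∀ x y f, linn (rs x f) y = linn x (rs y (raF.star' f))
  rinn_ls : ∀ e x y, rinn (ls e x) y = rinn x (ls (raE.star' e) y)
  linn_pos : ∀ x, ∃ e, linn x x = raE.mul (raE.star' e) e
  rinn_pos : ∀ x, ∃ f, rinn x x = raF.mul (raF.star' f) f
  rinn_def : ∀ x, rinn x x = 0 → x = 0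

variable {raE : RawCStarAlg E} {raF : RawCStarAlg F}

/-- Finite type, for bimodules over raw C*-algebra structures. -/
def BimodOver.FiniteType (bmo : BimodOver raE raF Y) : Prop :=
  (∃ (n : ℕ) (u : Fin n → Y), ∀ y, ∑ i, bmo.rs (u i) (bmo.rinn (u i) y) = y) ∧
  (∃ (m : ℕ) (v : Fin m → Y), ∀ y, ∑ j, bmo.ls (bmo.linn y (v j)) (v j) = y)

/-- Equivalence bimodule, for bimodules over raw C*-algebra structures. -/
def BimodOver.IsEquivalence (bmo : BimodOver raE raF Y) : Prop :=
  (∀ x y z, bmo.ls (bmo.linn x y) z = bmo.rs x (bmo.rinn y z)) ∧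
  Submodule.span ℂ (Set.range fun p : Y × Y => bmo.linn p.1 p.2) = ⊤ ∧
  Submodule.span ℂ (Set.range fun p : Y × Y => bmo.rinn p.1 p.2) = ⊤

end Over

section OverCoaction
variable {K : Type u} [Ring K] [Algebra ℂ K] [StarRing K] [StarModule ℂ K]
  [FiniteDimensional ℂ K]
variable {E F Y : Type u} [AddCommGroup E] [Module ℂ E] [AddCommGroup F] [Module ℂ F]
  [AddCommGroup Y] [Module ℂ Y] {raE : RawCStarAlg E} {raF : RawCStarAlg F}

/-- A coaction of the C*-Hopf algebra `K` (with comultiplication `ΔK`, counit `εK`) on the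
Hilbert bimodule `Y` over raw C*-algebra structures, with respect to coactions `θE`, `θF`
of `K` on `E` and `F`. -/
structure IsCoactionBimodOver (ΔK : K →ₗ[ℂ] K ⊗[ℂ] K) (εK : K →ₗ[ℂ] ℂ)
    (bmo : BimodOver raE raF Y) (θE : E →ₗ[ℂ] E ⊗[ℂ] K) (θF : F →ₗ[ℂ] F ⊗[ℂ] K)
    (lam : Y →ₗ[ℂ] Y ⊗[ℂ] K) : Prop where
  ls_compat : ∀ e y, lam (bmo.ls e y) = tact bmo.ls (θE e) (lam y)
  rs_compat : ∀ y f, lam (bmo.rs y f) = tact bmo.rs (lam y) (θF f)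
  linn_compat : ∀ x y, θE (bmo.linn x y) = tinnL bmo.linn (lam x) (lam y)
  rinn_compat : ∀ x y, θF (bmo.rinn x y) = tinnR bmo.rinn (lam x) (lam y)
  counital : ∀ y, appRight εK (lam y) = y
  coassoc : ∀ y, TensorProduct.map lam LinearMap.id (lam y)
      = (TensorProduct.assoc ℂ Y K K).symm (TensorProduct.map LinearMap.id ΔK (lam y))

/-- Strong Morita equivalence of two coactions of `K` on (raw) C*-algebras `E`, `F`. -/
def CoactSMEOver (ΔK : K →ₗ[ℂ] K ⊗[ℂ] K) (εK : K →ₗ[ℂ] ℂ)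
    (raE : RawCStarAlg E) (raF : RawCStarAlg F)
    (θE : E →ₗ[ℂ] E ⊗[ℂ] K) (θF : F →ₗ[ℂ] F ⊗[ℂ] K) : Prop :=
  ∃ (Y : Type u) (_ : AddCommGroup Y) (_ : Module ℂ Y) (bmo : BimodOver raE raF Y),
    bmo.IsEquivalence ∧
      ∃ lam : Y →ₗ[ℂ] Y ⊗[ℂ] K, IsCoactionBimodOver ΔK εK bmo θE θF lam

end OverCoaction

/-! ### Crossed product bimodules: characterizations -/

section CrossedBimod
variable {H H0 : Type u} [Ring H] [Algebra ℂ H] [StarRing H] [StarModule ℂ H]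
    [FiniteDimensional ℂ H] [Ring H0] [Algebra ℂ H0] [StarRing H0] [StarModule ℂ H0]
    [FiniteDimensional ℂ H0]
variable {A B X : Type u} [Ring A] [Algebra ℂ A] [StarRing A]
    [Ring B] [Algebra ℂ B] [StarRing B] [AddCommGroup X] [Module ℂ X]

/-- The characterization of the crossed product bimodule `X ⋊_λ H` (underlying vector space
`X ⊗ H`) over the crossed products `A ⋊_ρ H` and `B ⋊_σ H`, for a covariant system
`(A, B, X, ρ, σ, λ, H0)`:
`(a ⋊ h)(x ⋊ l) = a[h₍₁₎ ·_λ x] ⋊ h₍₂₎ l`, `(x ⋊ l)(b ⋊ m) = x[l₍₁₎ ·_σ b] ⋊ l₍₂₎ m`,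
`_{A⋊H}⟨x ⋊ h, y ⋊ l⟩ = _A⟨x, [S(h₍₁₎l₍₁₎*)* ·_λ y]⟩ ⋊ h₍₂₎l₍₂₎*`,
`⟨x ⋊ h, y ⋊ l⟩_{B⋊H} = [h₍₁₎* ·_σ ⟨x,y⟩_B] ⋊ h₍₂₎* l`. -/
structure CrossedBimodChar (dp : HopfPairData H H0) (bm : Bimod A B X)
    (ρ : A →ₗ[ℂ] A ⊗[ℂ] H0) (σ : B →ₗ[ℂ] B ⊗[ℂ] H0) (lam : X →ₗ[ℂ] X ⊗[ℂ] H0)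
    (caA : CrossedAlg dp ρ) (caB : CrossedAlg dp σ)
    (bmC : BimodOver caA.toRawCStarAlg caB.toRawCStarAlg (X ⊗[ℂ] H)) : Prop where
  ls_char : ∀ (a : A) (x : X) (h l : H) (n : ℕ) (h1 h2 : Fin n → H),
      dp.dH.comul h = ∑ i, h1 i ⊗ₜ h2 i →
      bmC.ls (a ⊗ₜ h) (x ⊗ₜ l)
        = ∑ i, bm.ls a (coactAct dp lam (h1 i) x) ⊗ₜ (h2 i * l)
  rs_char : ∀ (x : X) (b : B) (l m : H) (n : ℕ) (l1 l2 : Fin n → H),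
      dp.dH.comul l = ∑ i, l1 i ⊗ₜ l2 i →
      bmC.rs (x ⊗ₜ l) (b ⊗ₜ m)
        = ∑ i, bm.rs x (coactAct dp σ (l1 i) b) ⊗ₜ (l2 i * m)
  linn_char : ∀ (x y : X) (h l : H) (n : ℕ) (h1 h2 : Fin n → H)
      (m : ℕ) (l1 l2 : Fin m → H),
      dp.dH.comul h = ∑ i, h1 i ⊗ₜ h2 i →
      dp.dH.comul l = ∑ j, l1 j ⊗ₜ l2 j →
      bmC.linn (x ⊗ₜ h) (y ⊗ₜ l)
        = ∑ i, ∑ j, bm.linn x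
            (coactAct dp lam (star (dp.dH.antipode (h1 i * star (l1 j)))) y)
            ⊗ₜ (h2 i * star (l2 j))
  rinn_char : ∀ (x y : X) (h l : H) (n : ℕ) (h1 h2 : Fin n → H),
      dp.dH.comul h = ∑ i, h1 i ⊗ₜ h2 i →
      bmC.rinn (x ⊗ₜ h) (y ⊗ₜ l)
        = ∑ i, coactAct dp σ (star (h1 i)) (bm.rinn x y) ⊗ₜ (star (h2 i) * l)

/-- The characterization of the twisted crossed product bimodule `X ⋊_λ H` over the twisted
crossed products `A ⋊_{ρ,u} H` and `B ⋊_{σ,v} H`, for a twisted covariant system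
`(A, B, X, ρ, u, σ, v, λ, H0)`:
`(a ⋊ h)(x ⋊ l) = a[h₍₁₎ ·_λ x]v̂(h₍₂₎,l₍₁₎) ⋊ h₍₃₎l₍₂₎`,
`(x ⋊ l)(b ⋊ m) = x[l₍₁₎ ·_{σ,v} b]v̂(l₍₂₎,m₍₁₎) ⋊ l₍₃₎m₍₂₎`,
`_{A⋊H}⟨x ⋊ h, y ⋊ l⟩ = _A⟨x, [S(h₍₂₎l₍₃₎*)* ·_λ y]v̂(S(h₍₁₎l₍₂₎*)*, l₍₁₎)⟩ ⋊ h₍₃₎l₍₄₎*`,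
`⟨x ⋊ h, y ⋊ l⟩_{B⋊H} = v̂*(h₍₂₎*, S(h₍₁₎)*)[h₍₃₎* ·_{σ,v} ⟨x,y⟩_B]v̂(h₍₄₎*, l₍₁₎) ⋊ h₍₅₎*l₍₂₎`. -/
structure TwCrossedBimodChar (dp : HopfPairData H H0) (bm : Bimod A B X)
    (ρ : A →ₗ[ℂ] A ⊗[ℂ] H0) (u : (A ⊗[ℂ] H0) ⊗[ℂ] H0)
    (σ : B →ₗ[ℂ] B ⊗[ℂ] H0) (v : (B ⊗[ℂ] H0) ⊗[ℂ] H0) (lam : X →ₗ[ℂ] X ⊗[ℂ] H0)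
    (caA : TwCrossedAlg dp ρ u) (caB : TwCrossedAlg dp σ v)
    (bmC : BimodOver caA.toRawCStarAlg caB.toRawCStarAlg (X ⊗[ℂ] H)) : Prop where
  ls_char : ∀ (a : A) (x : X) (h l : H) (n : ℕ) (h1 h2 h3 : Fin n → H)
      (m : ℕ) (l1 l2 : Fin m → H),
      comul2 dp.dH h = ∑ i, (h1 i ⊗ₜ h2 i) ⊗ₜ h3 i →
      dp.dH.comul l = ∑ j, l1 j ⊗ₜ l2 j →
      bmC.ls (a ⊗ₜ h) (x ⊗ₜ l)
        = ∑ i, ∑ j, bm.ls a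
            (bm.rs (coactAct dp lam (h1 i) x) (uhat dp v (h2 i) (l1 j)))
            ⊗ₜ (h3 i * l2 j)
  rs_char : ∀ (x : X) (b : B) (l m : H) (n : ℕ) (l1 l2 l3 : Fin n → H)
      (k : ℕ) (m1 m2 : Fin k → H),
      comul2 dp.dH l = ∑ i, (l1 i ⊗ₜ l2 i) ⊗ₜ l3 i →
      dp.dH.comul m = ∑ j, m1 j ⊗ₜ m2 j →
      bmC.rs (x ⊗ₜ l) (b ⊗ₜ m)
        = ∑ i, ∑ j, bm.rs x
            (coactAct dp σ (l1 i) b * uhat dp v (l2 i) (m1 j))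
            ⊗ₜ (l3 i * m2 j)
  linn_char : ∀ (x y : X) (h l : H) (n : ℕ) (h1 h2 h3 : Fin n → H)
      (m : ℕ) (l1 l2 l3 l4 : Fin m → H),
      comul2 dp.dH h = ∑ i, (h1 i ⊗ₜ h2 i) ⊗ₜ h3 i →
      comul3 dp.dH l = ∑ j, ((l1 j ⊗ₜ l2 j) ⊗ₜ l3 j) ⊗ₜ l4 j →
      bmC.linn (x ⊗ₜ h) (y ⊗ₜ l)
        = ∑ i, ∑ j, bm.linn x
            (bm.rs (coactAct dp lam (star (dp.dH.antipode (h2 i * star (l3 j)))) y)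
              (uhat dp v (star (dp.dH.antipode (h1 i * star (l2 j)))) (l1 j)))
            ⊗ₜ (h3 i * star (l4 j))
  rinn_char : ∀ (x y : X) (h l : H) (n : ℕ) (h1 h2 h3 h4 h5 : Fin n → H)
      (m : ℕ) (l1 l2 : Fin m → H),
      comul4 dp.dH h = ∑ i, (((h1 i ⊗ₜ h2 i) ⊗ₜ h3 i) ⊗ₜ h4 i) ⊗ₜ h5 i →
      dp.dH.comul l = ∑ j, l1 j ⊗ₜ l2 j →
      bmC.rinn (x ⊗ₜ h) (y ⊗ₜ l)
        = ∑ i, ∑ j,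
            (uhat dp (tstarWith (tstarWith star) v) (star (h2 i))
                (star (dp.dH.antipode (h1 i)))
              * coactAct dp σ (star (h3 i)) (bm.rinn x y)
              * uhat dp v (star (h4 i)) (l1 j))
            ⊗ₜ (star (h5 i) * l2 j)

end CrossedBimod

/-! ### Auxiliary lemmas for Statement 10 -/

section AuxGeneric
variable {M M' C : Type*} [AddCommGroup M] [Module ℂ M] [AddCommGroup M'] [Module ℂ M']

theorem appRight_tmul [AddCommGroup C] [Module ℂ C] (f : C →ₗ[ℂ] ℂ) (m : M) (c : C) :
    appRight f (m ⊗ₜ[ℂ] c) = f c • m := by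
  simp [appRight]

theorem appRight_add_f [AddCommGroup C] [Module ℂ C] (f g : C →ₗ[ℂ] ℂ) (t : M ⊗[ℂ] C) :
    appRight (f + g) t = appRight f t + appRight g t := by
  induction t using TensorProduct.induction_on with
  | zero => simp
  | tmul m c => simp [appRight_tmul, add_smul]
  | add s t hs ht => simp only [map_add, hs, ht]; abel

theorem appRight_smul_f [AddCommGroup C] [Module ℂ C] (c : ℂ) (f : C →ₗ[ℂ] ℂ)
    (t : M ⊗[ℂ] C) : appRight (c • f) t = c • appRight f t := by
  induction t using TensorProduct.induction_on with
  | zero => simp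
  | tmul m d => simp [appRight_tmul, smul_smul]
  | add s t hs ht => simp only [map_add, hs, ht, smul_add]

theorem appRight_map [AddCommGroup C] [Module ℂ C] (f : C →ₗ[ℂ] ℂ) (g : M →ₗ[ℂ] M')
    (t : M ⊗[ℂ] C) :
    appRight f (TensorProduct.map g LinearMap.id t) = g (appRight f t) := by
  induction t using TensorProduct.induction_on with
  | zero => simp
  | tmul m c => simp [appRight_tmul]
  | add s t hs ht => simp only [map_add, hs, ht]

theorem map_id_comp {N P Q : Type*} [AddCommGroup N] [Module ℂ N] [AddCommGroup P]
    [Module ℂ P] [AddCommGroup Q] [Module ℂ Q] (g₂ : P →ₗ[ℂ] Q) (g₁ : N →ₗ[ℂ] P) :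
    TensorProduct.map (LinearMap.id : M →ₗ[ℂ] M) (g₂ ∘ₗ g₁)
      = TensorProduct.map LinearMap.id g₂ ∘ₗ TensorProduct.map LinearMap.id g₁ := by
  have h := TensorProduct.map_comp (LinearMap.id : M →ₗ[ℂ] M) g₂ LinearMap.id g₁
  rwa [LinearMap.id_comp] at h

theorem map_comp_id {N P Q : Type*} [AddCommGroup N] [Module ℂ N] [AddCommGroup P]
    [Module ℂ P] [AddCommGroup Q] [Module ℂ Q] (f₂ : P →ₗ[ℂ] Q) (f₁ : N →ₗ[ℂ] P) :
    TensorProduct.map (f₂ ∘ₗ f₁) (LinearMap.id : M →ₗ[ℂ] M)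
      = TensorProduct.map f₂ LinearMap.id ∘ₗ TensorProduct.map f₁ LinearMap.id := by
  have h := TensorProduct.map_comp f₂ (LinearMap.id : M →ₗ[ℂ] M) f₁ LinearMap.id
  rwa [LinearMap.id_comp] at h

variable [AddCommGroup C] [Module ℂ C] [FiniteDimensional ℂ C]

theorem tcoord_tmul (i : Fin (Module.finrank ℂ C)) (m : M) (c : C) :
    tcoord i (m ⊗ₜ[ℂ] c) = (Module.finBasis ℂ C).coord i c • m :=
  appRight_tmul _ _ _

theorem sum_tcoord (t : M ⊗[ℂ] C) :
    ∑ i, tcoord i t ⊗ₜ[ℂ] Module.finBasis ℂ C i = t := by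
  induction t using TensorProduct.induction_on with
  | zero => simp
  | tmul m c =>
      simp only [tcoord_tmul, TensorProduct.smul_tmul]
      rw [← TensorProduct.tmul_sum]
      congr 1
      simpa [Module.Basis.coord_apply] using (Module.finBasis ℂ C).sum_repr c
  | add s t hs ht =>
      simp only [map_add, TensorProduct.add_tmul, Finset.sum_add_distrib, hs, ht]

theorem appRight_eq_sum (f : C →ₗ[ℂ] ℂ) (t : M ⊗[ℂ] C) :
    appRight f t = ∑ i, f (Module.finBasis ℂ C i) • tcoord i t := by
  conv_lhs => rw [← sum_tcoord t]
  rw [map_sum]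
  simp [appRight_tmul]

end AuxGeneric

section AuxStar
variable {M C : Type*} [AddCommGroup M] [Module ℂ M] [StarAddMonoid M] [StarModule ℂ M]
  [Ring C] [Algebra ℂ C] [StarRing C] [StarModule ℂ C] [FiniteDimensional ℂ C]

theorem tstarWith_star_tmul (m : M) (c : C) :
    tstarWith (star : M → M) (m ⊗ₜ[ℂ] c) = star m ⊗ₜ[ℂ] star c := by
  unfold tstarWith
  simp only [tcoord_tmul, star_smul]
  have : ∀ i : Fin (Module.finrank ℂ C),
      (star ((Module.finBasis ℂ C).coord i c) • star m)
        ⊗ₜ[ℂ] star (Module.finBasis ℂ C i)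
      = star m ⊗ₜ[ℂ] star ((Module.finBasis ℂ C).coord i c • Module.finBasis ℂ C i) := by
    intro i
    rw [star_smul, TensorProduct.smul_tmul]
  rw [Finset.sum_congr rfl fun i _ => this i, ← TensorProduct.tmul_sum]
  congr 1
  rw [← star_sum]
  congr 1
  simpa [Module.Basis.coord_apply] using (Module.finBasis ℂ C).sum_repr c

theorem tstarWith_star_sum {ι : Type*} (s : Finset ι) (t : ι → M ⊗[ℂ] C) :
    tstarWith (star : M → M) (∑ i ∈ s, t i) = ∑ i ∈ s, tstarWith (star : M → M) (t i) := by
  unfold tstarWith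
  conv_rhs => rw [Finset.sum_comm]
  refine Finset.sum_congr rfl fun k _ => ?_
  rw [map_sum, star_sum, TensorProduct.sum_tmul]

end AuxStar

section AuxPair
variable {H H0 : Type u} [Ring H] [Algebra ℂ H] [StarRing H] [StarModule ℂ H]
    [FiniteDimensional ℂ H] [Ring H0] [Algebra ℂ H0] [StarRing H0] [StarModule ℂ H0]
    [FiniteDimensional ℂ H0]

theorem comul_decomp (dp : HopfPairData H H0) (k : H) :
    dp.dH.comul k = ∑ s, tcoord s (dp.dH.comul k) ⊗ₜ[ℂ] Module.finBasis ℂ H s :=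
  (sum_tcoord _).symm

theorem counit_contract (dp : HopfPairData H H0) (k : H) :
    ∑ s, dp.dH.counit (tcoord s (dp.dH.comul k)) • Module.finBasis ℂ H s = k := by
  have h := dp.dH.counit_left k
  rw [comul_decomp dp k, map_sum, map_sum] at h
  simp only [TensorProduct.map_tmul, LinearMap.id_coe, id_eq, TensorProduct.lid_tmul,
    AlgHom.toLinearMap_apply] at h
  exact h

theorem antipode_one (dp : HopfPairData H H0) : dp.dH.antipode 1 = 1 := by
  have h1 : dp.dH.comul (1 : H) = ∑ _i : Fin 1, (1 : H) ⊗ₜ[ℂ] (1 : H) := by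
    simp [Algebra.TensorProduct.one_def]
  have h := dp.dH.antipode_left 1 1 (fun _ => 1) (fun _ => 1) h1
  simpa using h

theorem nu_contract (dp : HopfPairData H H0) (α : H) :
    ∑ t, Module.finBasis ℂ H t * star (dp.dH.antipode (star (tcoord t (dp.dH.comul α))))
      = dp.dH.counit α • 1 := by
  have hdec : dp.dH.comul (star α)
      = ∑ t, star (tcoord t (dp.dH.comul α)) ⊗ₜ[ℂ] star (Module.finBasis ℂ H t) := by
    rw [dp.dH.comul_star α]
    conv_lhs => rw [comul_decomp dp α]
    rw [tstarWith_star_sum]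
    exact Finset.sum_congr rfl fun t _ => tstarWith_star_tmul _ _
  have h := dp.dH.antipode_left (star α) _
    (fun t => star (tcoord t (dp.dH.comul α)))
    (fun t => star (Module.finBasis ℂ H t)) hdec
  have h2 := congrArg star h
  rw [star_sum] at h2
  simp only [star_mul, star_star] at h2
  rw [dp.dH.counit_star, star_smul, star_one, starRingEnd_apply, star_star] at h2
  exact h2

theorem pair_one_lm (dp : HopfPairData H H0) :
    dp.pair 1 = dp.dH0.counit.toLinearMap :=
  LinearMap.ext fun φ => dp.pair_one_left φ

section AuxAct
variable {M : Type u} [AddCommGroup M] [Module ℂ M]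

theorem coactAct_one (dp : HopfPairData H H0) (θ : M →ₗ[ℂ] M ⊗[ℂ] H0)
    (hc : ∀ m, appRight dp.dH0.counit.toLinearMap (θ m) = m) (m : M) :
    coactAct dp θ 1 m = m := by
  unfold coactAct
  rw [pair_one_lm]
  exact hc m

/-- `coactAct` bundled as a linear map in the Hopf algebra variable. -/
def coactActH (dp : HopfPairData H H0) (θ : M →ₗ[ℂ] M ⊗[ℂ] H0) (m : M) : H →ₗ[ℂ] M where
  toFun h := coactAct dp θ h m
  map_add' h h' := by
    show appRight (dp.pair (h + h')) (θ m)
        = appRight (dp.pair h) (θ m) + appRight (dp.pair h') (θ m)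
    rw [map_add, appRight_add_f]
  map_smul' c h := by
    show appRight (dp.pair (c • h)) (θ m) = (RingHom.id ℂ) c • appRight (dp.pair h) (θ m)
    rw [map_smul, appRight_smul_f]
    rfl

@[simp] theorem coactActH_apply (dp : HopfPairData H H0) (θ : M →ₗ[ℂ] M ⊗[ℂ] H0)
    (m : M) (h : H) : coactActH dp θ m h = coactAct dp θ h m := rfl

theorem coactAct_mul (dp : HopfPairData H H0) (θ : M →ₗ[ℂ] M ⊗[ℂ] H0)
    (hco : ∀ m, TensorProduct.map θ LinearMap.id (θ m)
        = (TensorProduct.assoc ℂ M H0 H0).symm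
            (TensorProduct.map LinearMap.id dp.dH0.comul.toLinearMap (θ m)))
    (p q : H) (m : M) :
    coactAct dp θ p (coactAct dp θ q m) = coactAct dp θ (p * q) m := by
  have key : ∀ w : M ⊗[ℂ] H0,
      appRight (dp.pair p) (appRight (dp.pair q)
        ((TensorProduct.assoc ℂ M H0 H0).symm
          (TensorProduct.map LinearMap.id dp.dH0.comul.toLinearMap w)))
      = appRight (dp.pair (p * q)) w := by
    intro w
    induction w using TensorProduct.induction_on with
    | zero => simp
    | tmul m' φ =>
        simp only [TensorProduct.map_tmul, LinearMap.id_coe, id_eq, AlgHom.toLinearMap_apply]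
        rw [appRight_tmul, dp.pair_mul_left p q φ _ (fun u => tcoord u (dp.dH0.comul φ))
          (fun u => Module.finBasis ℂ H0 u) ((sum_tcoord _).symm), Finset.sum_smul]
        conv_lhs => rw [← sum_tcoord (dp.dH0.comul φ), TensorProduct.tmul_sum]
        simp only [map_sum, TensorProduct.assoc_symm_tmul, appRight_tmul, map_smul]
        refine Finset.sum_congr rfl fun u _ => ?_
        rw [mul_smul]
        exact smul_comm _ _ _
    | add w₁ w₂ hw₁ hw₂ =>
        simp only [map_add, hw₁, hw₂]
  unfold coactAct
  rw [← appRight_map (dp.pair q) θ (θ m), hco m]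
  exact key (θ m)

end AuxAct

section AuxOp
variable {P Q R : Type u} [AddCommGroup P] [Module ℂ P] [AddCommGroup Q] [Module ℂ Q]
  [AddCommGroup R] [Module ℂ R]

theorem appRight_pair_tact (dp : HopfPairData H H0) (op : P → Q → R)
    (h1 : ∀ p p' q, op (p + p') q = op p q + op p' q)
    (h2 : ∀ (c : ℂ) p q, op (c • p) q = c • op p q)
    (h3 : ∀ p q q', op p (q + q') = op p q + op p q')
    (h4 : ∀ (c : ℂ) p q, op p (c • q) = c • op p q)
    (k : H) (s : P ⊗[ℂ] H0) (t : Q ⊗[ℂ] H0) :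
    appRight (dp.pair k) (tact op s t)
      = ∑ u, op (appRight (dp.pair (tcoord u (dp.dH.comul k))) s)
          (appRight (dp.pair (Module.finBasis ℂ H u)) t) := by
  have hsum1 : ∀ {ι : Type} (S : Finset ι) (g : ι → P) (q : Q),
      op (∑ i ∈ S, g i) q = ∑ i ∈ S, op (g i) q := fun S g q =>
    map_sum (AddMonoidHom.mk' (fun p => op p q) (fun a b => h1 a b q)) g S
  have hsum2 : ∀ {ι : Type} (S : Finset ι) (p : P) (g : ι → Q),
      op p (∑ i ∈ S, g i) = ∑ i ∈ S, op p (g i) := fun S p g =>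
    map_sum (AddMonoidHom.mk' (fun q => op p q) (fun a b => h3 p a b)) g S
  have key : ∀ u, op (appRight (dp.pair (tcoord u (dp.dH.comul k))) s)
      (appRight (dp.pair (Module.finBasis ℂ H u)) t)
      = ∑ i, ∑ j, (dp.pair (tcoord u (dp.dH.comul k)) (Module.finBasis ℂ H0 i)
          * dp.pair (Module.finBasis ℂ H u) (Module.finBasis ℂ H0 j))
          • op (tcoord i s) (tcoord j t) := by
    intro u
    rw [appRight_eq_sum, appRight_eq_sum, hsum1]
    refine Finset.sum_congr rfl fun i _ => ?_
    rw [h2, hsum2, Finset.smul_sum]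
    refine Finset.sum_congr rfl fun j _ => ?_
    rw [h4, smul_smul]
  have hmul : ∀ i j, dp.pair k (Module.finBasis ℂ H0 i * Module.finBasis ℂ H0 j)
      = ∑ u, dp.pair (tcoord u (dp.dH.comul k)) (Module.finBasis ℂ H0 i)
          * dp.pair (Module.finBasis ℂ H u) (Module.finBasis ℂ H0 j) := fun i j =>
    dp.pair_mul_right k _ _ _ (fun u => tcoord u (dp.dH.comul k))
      (fun u => Module.finBasis ℂ H u) ((sum_tcoord _).symm)
  unfold tact tmix
  rw [map_sum]
  calc ∑ i, appRight (dp.pair k)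
        (∑ j, op (tcoord i s) (tcoord j t)
          ⊗ₜ[ℂ] (Module.finBasis ℂ H0 i * Module.finBasis ℂ H0 j))
      = ∑ i, ∑ j, dp.pair k (Module.finBasis ℂ H0 i * Module.finBasis ℂ H0 j)
          • op (tcoord i s) (tcoord j t) := by
        refine Finset.sum_congr rfl fun i _ => ?_
        rw [map_sum]
        exact Finset.sum_congr rfl fun j _ => appRight_tmul _ _ _
    _ = ∑ i, ∑ j, ∑ u,
          (dp.pair (tcoord u (dp.dH.comul k)) (Module.finBasis ℂ H0 i)
            * dp.pair (Module.finBasis ℂ H u) (Module.finBasis ℂ H0 j))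
          • op (tcoord i s) (tcoord j t) := by
        refine Finset.sum_congr rfl fun i _ => Finset.sum_congr rfl fun j _ => ?_
        rw [hmul, Finset.sum_smul]
    _ = ∑ u, ∑ i, ∑ j,
          (dp.pair (tcoord u (dp.dH.comul k)) (Module.finBasis ℂ H0 i)
            * dp.pair (Module.finBasis ℂ H u) (Module.finBasis ℂ H0 j))
          • op (tcoord i s) (tcoord j t) := by
        exact (Finset.sum_congr rfl fun i _ => Finset.sum_comm).trans Finset.sum_comm
    _ = ∑ u, op (appRight (dp.pair (tcoord u (dp.dH.comul k))) s)
          (appRight (dp.pair (Module.finBasis ℂ H u)) t) :=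
        Finset.sum_congr rfl fun u _ => (key u).symm

theorem appRight_pair_tinnL (dp : HopfPairData H H0) (op : P → P → R)
    (h1 : ∀ p p' q, op (p + p') q = op p q + op p' q)
    (h2 : ∀ (c : ℂ) p q, op (c • p) q = c • op p q)
    (h3 : ∀ p q q', op p (q + q') = op p q + op p q')
    (h4 : ∀ (c : ℂ) p q, op p (c • q) = starRingEnd ℂ c • op p q)
    (k : H) (s : P ⊗[ℂ] H0) (t : P ⊗[ℂ] H0) :
    appRight (dp.pair k) (tinnL op s t)
      = ∑ u, op (appRight (dp.pair (tcoord u (dp.dH.comul k))) s)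
          (appRight (dp.pair (star (dp.dH.antipode (Module.finBasis ℂ H u)))) t) := by
  have hsum1 : ∀ {ι : Type} (S : Finset ι) (g : ι → P) (q : P),
      op (∑ i ∈ S, g i) q = ∑ i ∈ S, op (g i) q := fun S g q =>
    map_sum (AddMonoidHom.mk' (fun p => op p q) (fun a b => h1 a b q)) g S
  have hsum2 : ∀ {ι : Type} (S : Finset ι) (p : P) (g : ι → P),
      op p (∑ i ∈ S, g i) = ∑ i ∈ S, op p (g i) := fun S p g =>
    map_sum (AddMonoidHom.mk' (fun q => op p q) (fun a b => h3 p a b)) g S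
  have key : ∀ u, op (appRight (dp.pair (tcoord u (dp.dH.comul k))) s)
      (appRight (dp.pair (star (dp.dH.antipode (Module.finBasis ℂ H u)))) t)
      = ∑ i, ∑ j, (dp.pair (tcoord u (dp.dH.comul k)) (Module.finBasis ℂ H0 i)
          * starRingEnd ℂ (dp.pair (star (dp.dH.antipode (Module.finBasis ℂ H u)))
              (Module.finBasis ℂ H0 j)))
          • op (tcoord i s) (tcoord j t) := by
    intro u
    rw [appRight_eq_sum, appRight_eq_sum, hsum1]
    refine Finset.sum_congr rfl fun i _ => ?_
    rw [h2, hsum2, Finset.smul_sum]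
    refine Finset.sum_congr rfl fun j _ => ?_
    rw [h4, smul_smul]
  have hmul : ∀ i j, dp.pair k (Module.finBasis ℂ H0 i * star (Module.finBasis ℂ H0 j))
      = ∑ u, dp.pair (tcoord u (dp.dH.comul k)) (Module.finBasis ℂ H0 i)
          * starRingEnd ℂ (dp.pair (star (dp.dH.antipode (Module.finBasis ℂ H u)))
              (Module.finBasis ℂ H0 j)) := by
    intro i j
    rw [dp.pair_mul_right k _ _ _ (fun u => tcoord u (dp.dH.comul k))
      (fun u => Module.finBasis ℂ H u) ((sum_tcoord _).symm)]
    exact Finset.sum_congr rfl fun u _ => by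
      rw [dp.pair_star' (Module.finBasis ℂ H u) (Module.finBasis ℂ H0 j)]
  unfold tinnL tmix
  rw [map_sum]
  calc ∑ i, appRight (dp.pair k)
        (∑ j, op (tcoord i s) (tcoord j t)
          ⊗ₜ[ℂ] (Module.finBasis ℂ H0 i * star (Module.finBasis ℂ H0 j)))
      = ∑ i, ∑ j, dp.pair k (Module.finBasis ℂ H0 i * star (Module.finBasis ℂ H0 j))
          • op (tcoord i s) (tcoord j t) := by
        refine Finset.sum_congr rfl fun i _ => ?_
        rw [map_sum]
        exact Finset.sum_congr rfl fun j _ => appRight_tmul _ _ _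
    _ = ∑ i, ∑ j, ∑ u,
          (dp.pair (tcoord u (dp.dH.comul k)) (Module.finBasis ℂ H0 i)
            * starRingEnd ℂ (dp.pair (star (dp.dH.antipode (Module.finBasis ℂ H u)))
                (Module.finBasis ℂ H0 j)))
          • op (tcoord i s) (tcoord j t) := by
        refine Finset.sum_congr rfl fun i _ => Finset.sum_congr rfl fun j _ => ?_
        rw [hmul, Finset.sum_smul]
    _ = ∑ u, ∑ i, ∑ j,
          (dp.pair (tcoord u (dp.dH.comul k)) (Module.finBasis ℂ H0 i)
            * starRingEnd ℂ (dp.pair (star (dp.dH.antipode (Module.finBasis ℂ H u)))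
                (Module.finBasis ℂ H0 j)))
          • op (tcoord i s) (tcoord j t) := by
        exact (Finset.sum_congr rfl fun i _ => Finset.sum_comm).trans Finset.sum_comm
    _ = ∑ u, op (appRight (dp.pair (tcoord u (dp.dH.comul k))) s)
          (appRight (dp.pair (star (dp.dH.antipode (Module.finBasis ℂ H u)))) t) :=
        Finset.sum_congr rfl fun u _ => (key u).symm

end AuxOp

end AuxPair

section AuxHopf
variable {H H0 : Type u} [Ring H] [Algebra ℂ H] [StarRing H] [StarModule ℂ H]
    [FiniteDimensional ℂ H] [Ring H0] [Algebra ℂ H0] [StarRing H0] [StarModule ℂ H0]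
    [FiniteDimensional ℂ H0]

/-- `ν = ⋆ ∘ S ∘ ⋆` as a linear map. -/
def nuL (dp : HopfPairData H H0) : H →ₗ[ℂ] H where
  toFun m := star (dp.dH.antipode (star m))
  map_add' m m' := by rw [star_add, map_add, star_add]
  map_smul' c m := by
    rw [star_smul, map_smul, star_smul, star_star]
    rfl

@[simp] theorem nuL_apply (dp : HopfPairData H H0) (m : H) :
    nuL dp m = star (dp.dH.antipode (star m)) := rfl

/-- `a ⊗ b ↦ b * ν a`. -/
def muNuL (dp : HopfPairData H H0) : H ⊗[ℂ] H →ₗ[ℂ] H :=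
  TensorProduct.lift (LinearMap.mk₂ ℂ (fun a b => b * nuL dp a)
    (fun a a' b => by rw [map_add, mul_add])
    (fun c a b => by rw [map_smul, mul_smul_comm])
    (fun a b b' => by rw [add_mul])
    (fun c a b => by rw [smul_mul_assoc]))

@[simp] theorem muNuL_tmul (dp : HopfPairData H H0) (a b : H) :
    muNuL dp (a ⊗ₜ[ℂ] b) = b * nuL dp a := rfl

theorem muNu_comul (dp : HopfPairData H H0) (α : H) :
    muNuL dp (dp.dH.comul α) = dp.dH.counit α • 1 := by
  rw [comul_decomp dp α, map_sum]
  simpa using nu_contract dp α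

/-- `(assoc).symm (a ⊗ u) = (mk a ⊗ id) u`. -/
theorem assocSymm_mk (a : H) (u : H ⊗[ℂ] H) :
    (TensorProduct.assoc ℂ H H H).symm (a ⊗ₜ[ℂ] u)
      = TensorProduct.map (TensorProduct.mk ℂ H H a) LinearMap.id u := by
  induction u using TensorProduct.induction_on with
  | zero => simp
  | tmul p q => simp [TensorProduct.assoc_symm_tmul]
  | add u₁ u₂ h₁ h₂ => rw [TensorProduct.tmul_add, map_add, map_add, h₁, h₂]

/-- Reassociation `a ⊗ ((p ⊗ q) ⊗ r) ↦ ((a ⊗ p) ⊗ q) ⊗ r`. -/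
def reassocMap : H ⊗[ℂ] ((H ⊗[ℂ] H) ⊗[ℂ] H) →ₗ[ℂ] ((H ⊗[ℂ] H) ⊗[ℂ] H) ⊗[ℂ] H :=
  (TensorProduct.map ((TensorProduct.assoc ℂ H H H).symm.toLinearMap) LinearMap.id) ∘ₗ
    ((TensorProduct.assoc ℂ H (H ⊗[ℂ] H) H).symm.toLinearMap)

theorem reassocMap_tmul (a : H) (w : (H ⊗[ℂ] H) ⊗[ℂ] H) :
    reassocMap (a ⊗ₜ[ℂ] w)
      = TensorProduct.map (TensorProduct.map (TensorProduct.mk ℂ H H a) LinearMap.id)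
          LinearMap.id w := by
  induction w using TensorProduct.induction_on with
  | zero => simp
  | tmul u r =>
      simp only [reassocMap, LinearMap.comp_apply, LinearEquiv.coe_coe,
        TensorProduct.assoc_symm_tmul, TensorProduct.map_tmul, assocSymm_mk,
        LinearMap.id_coe, id_eq]
  | add w₁ w₂ h₁ h₂ => simp only [TensorProduct.tmul_add, map_add, h₁, h₂]

theorem CAmap (dp : HopfPairData H H0) :
    comul2 dp.dH
      = (TensorProduct.assoc ℂ H H H).symm.toLinearMap ∘ₗ
          TensorProduct.map LinearMap.id dp.dH.comul.toLinearMap ∘ₗ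
          dp.dH.comul.toLinearMap := by
  refine LinearMap.ext fun m => ?_
  have h := dp.dH.coassoc m
  simpa [comul2] using h

theorem CAinv (dp : HopfPairData H H0) (k : H) :
    TensorProduct.map LinearMap.id dp.dH.comul.toLinearMap (dp.dH.comul k)
      = TensorProduct.assoc ℂ H H H (comul2 dp.dH k) := by
  rw [CAmap dp]
  simp only [LinearMap.comp_apply, LinearEquiv.coe_coe, AlgHom.toLinearMap_apply]
  rw [LinearEquiv.apply_symm_apply]

theorem claimB' (dp : HopfPairData H H0) (u : (H ⊗[ℂ] H) ⊗[ℂ] H) :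
    reassocMap (TensorProduct.map LinearMap.id
        (TensorProduct.map dp.dH.comul.toLinearMap LinearMap.id)
        (TensorProduct.assoc ℂ H H H u))
      = TensorProduct.map
          ((TensorProduct.assoc ℂ H H H).symm.toLinearMap ∘ₗ
            TensorProduct.map LinearMap.id dp.dH.comul.toLinearMap)
          LinearMap.id u := by
  induction u using TensorProduct.induction_on with
  | zero => simp
  | tmul w c =>
      induction w using TensorProduct.induction_on with
      | zero => simp
      | tmul a b =>
          simp only [TensorProduct.assoc_tmul, TensorProduct.map_tmul, LinearMap.id_coe,
            id_eq, reassocMap_tmul, LinearMap.comp_apply, LinearEquiv.coe_coe,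
            assocSymm_mk]
      | add w₁ w₂ h₁ h₂ =>
          simp only [TensorProduct.add_tmul, map_add, h₁, h₂]
  | add u₁ u₂ h₁ h₂ => simp only [map_add, h₁, h₂]

/-- Collapse lemma: `(μν ⊗ id)(Δ² m) = 1 ⊗ m`. -/
theorem muNu_comul2 (dp : HopfPairData H H0) (m : H) :
    TensorProduct.map (muNuL dp) LinearMap.id (comul2 dp.dH m) = (1 : H) ⊗ₜ[ℂ] m := by
  have hc : comul2 dp.dH m
      = ∑ t, dp.dH.comul (tcoord t (dp.dH.comul m)) ⊗ₜ[ℂ] Module.finBasis ℂ H t := by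
    show TensorProduct.map dp.dH.comul.toLinearMap LinearMap.id (dp.dH.comul m) = _
    conv_lhs => rw [comul_decomp dp m]
    rw [map_sum]
    exact Finset.sum_congr rfl fun t _ => by
      rw [TensorProduct.map_tmul]; rfl
  rw [hc, map_sum]
  have : ∀ t, TensorProduct.map (muNuL dp) LinearMap.id
      (dp.dH.comul (tcoord t (dp.dH.comul m)) ⊗ₜ[ℂ] Module.finBasis ℂ H t)
      = (1 : H) ⊗ₜ[ℂ] (dp.dH.counit (tcoord t (dp.dH.comul m)) • Module.finBasis ℂ H t) := by
    intro t
    rw [TensorProduct.map_tmul, muNu_comul dp, LinearMap.id_coe, id_eq,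
      TensorProduct.smul_tmul]
  rw [Finset.sum_congr rfl fun t _ => this t, ← TensorProduct.tmul_sum,
    counit_contract dp m]

/-- Expansion of `comul2` in canonical coordinates. -/
theorem comul2_expand (dp : HopfPairData H H0) (m : H) :
    comul2 dp.dH m
      = ∑ u, ∑ t,
          (tcoord t (dp.dH.comul (tcoord u (dp.dH.comul m))) ⊗ₜ[ℂ] Module.finBasis ℂ H t)
            ⊗ₜ[ℂ] Module.finBasis ℂ H u := by
  show TensorProduct.map dp.dH.comul.toLinearMap LinearMap.id (dp.dH.comul m) = _
  conv_lhs => rw [comul_decomp dp m]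
  rw [map_sum]
  refine Finset.sum_congr rfl fun u _ => ?_
  rw [TensorProduct.map_tmul]
  conv_lhs => rw [AlgHom.toLinearMap_apply,
    comul_decomp dp (tcoord u (dp.dH.comul m))]
  rw [TensorProduct.sum_tmul]
  rfl

/-- The key regrouping identity `X1 = (Δ² ⊗ id)(Δ k)`. -/
theorem regroup (dp : HopfPairData H H0) (k : H) :
    ∑ s, TensorProduct.map
        (TensorProduct.map (TensorProduct.mk ℂ H H (tcoord s (dp.dH.comul k))) LinearMap.id)
        LinearMap.id (comul2 dp.dH (Module.finBasis ℂ H s))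
      = TensorProduct.map (comul2 dp.dH) LinearMap.id (dp.dH.comul k) := by
  have e1 : ∑ s, TensorProduct.map
      (TensorProduct.map (TensorProduct.mk ℂ H H (tcoord s (dp.dH.comul k))) LinearMap.id)
      LinearMap.id (comul2 dp.dH (Module.finBasis ℂ H s))
      = reassocMap (TensorProduct.map LinearMap.id (comul2 dp.dH) (dp.dH.comul k)) := by
    conv_rhs => rw [comul_decomp dp k]
    rw [map_sum, map_sum]
    refine Finset.sum_congr rfl fun s _ => ?_
    rw [TensorProduct.map_tmul, LinearMap.id_coe, id_eq, reassocMap_tmul]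
  have e2 : TensorProduct.map LinearMap.id (comul2 dp.dH) (dp.dH.comul k)
      = TensorProduct.map LinearMap.id
          (TensorProduct.map dp.dH.comul.toLinearMap LinearMap.id)
          (TensorProduct.map LinearMap.id dp.dH.comul.toLinearMap (dp.dH.comul k)) := by
    calc TensorProduct.map LinearMap.id (comul2 dp.dH) (dp.dH.comul k)
        = TensorProduct.map (LinearMap.id : H →ₗ[ℂ] H)
            ((TensorProduct.map dp.dH.comul.toLinearMap LinearMap.id) ∘ₗ
              dp.dH.comul.toLinearMap) (dp.dH.comul k) := rfl
      _ = (TensorProduct.map LinearMap.id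
              (TensorProduct.map dp.dH.comul.toLinearMap LinearMap.id) ∘ₗ
            TensorProduct.map LinearMap.id dp.dH.comul.toLinearMap) (dp.dH.comul k) := by
          rw [map_id_comp]
      _ = _ := rfl
  have e3 : TensorProduct.map (comul2 dp.dH) LinearMap.id (dp.dH.comul k)
      = TensorProduct.map ((TensorProduct.assoc ℂ H H H).symm.toLinearMap ∘ₗ
            TensorProduct.map LinearMap.id dp.dH.comul.toLinearMap) LinearMap.id
          (comul2 dp.dH k) := by
    have hcomp : TensorProduct.map (comul2 dp.dH) (LinearMap.id : H →ₗ[ℂ] H)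
        = TensorProduct.map ((TensorProduct.assoc ℂ H H H).symm.toLinearMap ∘ₗ
              TensorProduct.map LinearMap.id dp.dH.comul.toLinearMap) LinearMap.id ∘ₗ
            TensorProduct.map dp.dH.comul.toLinearMap LinearMap.id := by
      rw [← map_comp_id]
      congr 1
      rw [CAmap dp]
      exact (LinearMap.comp_assoc _ _ _).symm
    rw [hcomp]
    rfl
  rw [e1, e2, CAinv dp k, claimB' dp, ← e3]

/-- Coordinate slice of coassociativity. -/
theorem comul_slice (dp : HopfPairData H H0) (h : H) (t : Fin (Module.finrank ℂ H)) :
    ∑ s, tcoord s (dp.dH.comul h) ⊗ₜ[ℂ]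
        tcoord t (dp.dH.comul (Module.finBasis ℂ H s))
      = dp.dH.comul (tcoord t (dp.dH.comul h)) := by
  have lam_tmul : ∀ (U : H ⊗[ℂ] H) (r : H),
      TensorProduct.map LinearMap.id (tcoord t)
        (TensorProduct.assoc ℂ H H H (U ⊗ₜ[ℂ] r))
      = (Module.finBasis ℂ H).coord t r • U := by
    intro U r
    induction U using TensorProduct.induction_on with
    | zero => simp
    | tmul p q =>
        rw [TensorProduct.assoc_tmul, TensorProduct.map_tmul, tcoord_tmul,
          LinearMap.id_coe, id_eq, TensorProduct.tmul_smul]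
    | add U₁ U₂ h₁ h₂ =>
        rw [TensorProduct.add_tmul, map_add, map_add, h₁, h₂, smul_add]
  have hc : comul2 dp.dH h
      = ∑ u, dp.dH.comul (tcoord u (dp.dH.comul h)) ⊗ₜ[ℂ] Module.finBasis ℂ H u := by
    show TensorProduct.map dp.dH.comul.toLinearMap LinearMap.id (dp.dH.comul h) = _
    conv_lhs => rw [comul_decomp dp h]
    rw [map_sum]
    exact Finset.sum_congr rfl fun u _ => by rw [TensorProduct.map_tmul]; rfl
  have way1 : TensorProduct.map LinearMap.id (tcoord t)
        (TensorProduct.assoc ℂ H H H (comul2 dp.dH h))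
      = dp.dH.comul (tcoord t (dp.dH.comul h)) := by
    rw [hc, map_sum, map_sum]
    rw [Finset.sum_congr rfl fun u _ => lam_tmul _ _]
    have hcoord : ∀ u, (Module.finBasis ℂ H).coord t (Module.finBasis ℂ H u)
        = if u = t then (1 : ℂ) else 0 := by
      intro u
      simp [Module.Basis.coord_apply, Module.Basis.repr_self, Finsupp.single_apply]
    rw [Finset.sum_congr rfl fun u _ => by rw [hcoord u, ite_smul, one_smul, zero_smul]]
    simp
  have way2 : TensorProduct.map LinearMap.id (tcoord t)
        (TensorProduct.assoc ℂ H H H (comul2 dp.dH h))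
      = ∑ s, tcoord s (dp.dH.comul h) ⊗ₜ[ℂ]
          tcoord t (dp.dH.comul (Module.finBasis ℂ H s)) := by
    rw [← CAinv dp h]
    conv_lhs => rw [comul_decomp dp h, map_sum, map_sum]
    refine Finset.sum_congr rfl fun s _ => ?_
    rw [TensorProduct.map_tmul, TensorProduct.map_tmul]
    rfl
  rw [← way2, way1]

end AuxHopf

section AuxMain
variable {H H0 : Type u} [Ring H] [Algebra ℂ H] [StarRing H] [StarModule ℂ H]
    [FiniteDimensional ℂ H] [Ring H0] [Algebra ℂ H0] [StarRing H0] [StarModule ℂ H0]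
    [FiniteDimensional ℂ H0]
variable {A B X : Type u} [Ring A] [Algebra ℂ A] [StarRing A]
    [Ring B] [Algebra ℂ B] [StarRing B] [AddCommGroup X] [Module ℂ X]

theorem bm_ls_sum (bm : Bimod A B X) {ι : Type} (S : Finset ι) (g : ι → A) (w : X) :
    bm.ls (∑ i ∈ S, g i) w = ∑ i ∈ S, bm.ls (g i) w :=
  map_sum (AddMonoidHom.mk' (fun a => bm.ls a w) (fun a b => bm.ls_add a b w)) g S

theorem coactAct_add {M : Type u} [AddCommGroup M] [Module ℂ M] (dp : HopfPairData H H0)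
    (θ : M →ₗ[ℂ] M ⊗[ℂ] H0) (m : M) (p p' : H) :
    coactAct dp θ (p + p') m = coactAct dp θ p m + coactAct dp θ p' m :=
  map_add (coactActH dp θ m) p p'

theorem coactAct_smul {M : Type u} [AddCommGroup M] [Module ℂ M] (dp : HopfPairData H H0)
    (θ : M →ₗ[ℂ] M ⊗[ℂ] H0) (m : M) (c : ℂ) (p : H) :
    coactAct dp θ (c • p) m = c • coactAct dp θ p m :=
  map_smul (coactActH dp θ m) c p

theorem coactAct_sum {M : Type u} [AddCommGroup M] [Module ℂ M] (dp : HopfPairData H H0)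
    (θ : M →ₗ[ℂ] M ⊗[ℂ] H0) (m : M) {ι : Type} (S : Finset ι) (g : ι → H) :
    coactAct dp θ (∑ i ∈ S, g i) m = ∑ i ∈ S, coactAct dp θ (g i) m :=
  map_sum (coactActH dp θ m) g S

theorem act_ls (dp : HopfPairData H H0) (bm : Bimod A B X) (ρ : A →ₗ[ℂ] A ⊗[ℂ] H0)
    (lam : X →ₗ[ℂ] X ⊗[ℂ] H0)
    (hls : ∀ a x, lam (bm.ls a x) = tact bm.ls (ρ a) (lam x)) (k : H) (a : A) (w : X) :
    coactAct dp lam k (bm.ls a w)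
      = ∑ u, bm.ls (coactAct dp ρ (tcoord u (dp.dH.comul k)) a)
          (coactAct dp lam (Module.finBasis ℂ H u) w) := by
  show appRight (dp.pair k) (lam (bm.ls a w)) = _
  rw [hls]
  exact appRight_pair_tact dp bm.ls bm.ls_add bm.ls_smul bm.ls_add' bm.ls_smul' k
    (ρ a) (lam w)

theorem act_linn (dp : HopfPairData H H0) (bm : Bimod A B X) (ρ : A →ₗ[ℂ] A ⊗[ℂ] H0)
    (lam : X →ₗ[ℂ] X ⊗[ℂ] H0)
    (hlinn : ∀ x y, ρ (bm.linn x y) = tinnL bm.linn (lam x) (lam y)) (k : H) (x y : X) :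
    coactAct dp ρ k (bm.linn x y)
      = ∑ u, bm.linn (coactAct dp lam (tcoord u (dp.dH.comul k)) x)
          (coactAct dp lam (star (dp.dH.antipode (Module.finBasis ℂ H u))) y) := by
  show appRight (dp.pair k) (ρ (bm.linn x y)) = _
  rw [hlinn]
  exact appRight_pair_tinnL dp bm.linn bm.linn_add_left bm.linn_smul_left
    bm.linn_add_right bm.linn_smul_right k (lam x) (lam y)

theorem star_c (dp : HopfPairData H H0) (bm : Bimod A B X) (ρ : A →ₗ[ℂ] A ⊗[ℂ] H0)
    (lam : X →ₗ[ℂ] X ⊗[ℂ] H0)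
    (hls : ∀ a x, lam (bm.ls a x) = tact bm.ls (ρ a) (lam x))
    (hlinn : ∀ x y, ρ (bm.linn x y) = tinnL bm.linn (lam x) (lam y))
    {nl : ℕ} (v : Fin nl → X)
    (hv : ∀ x, ∑ j, bm.ls (bm.linn x (v j)) (v j) = x) (m : H) (y : X) :
    coactAct dp lam m y
      = ∑ j, ∑ u, ∑ t, bm.ls
          (bm.linn (coactAct dp lam
              (tcoord t (dp.dH.comul (tcoord u (dp.dH.comul m)))) y)
            (coactAct dp lam (star (dp.dH.antipode (Module.finBasis ℂ H t))) (v j)))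
          (coactAct dp lam (Module.finBasis ℂ H u) (v j)) := by
  conv_lhs => rw [← hv y]
  have hsum : coactAct dp lam m (∑ j, bm.ls (bm.linn y (v j)) (v j))
      = ∑ j, coactAct dp lam m (bm.ls (bm.linn y (v j)) (v j)) := by
    show appRight (dp.pair m) (lam _) = _
    rw [map_sum, map_sum]
    rfl
  rw [hsum]
  refine Finset.sum_congr rfl fun j _ => ?_
  rw [act_ls dp bm ρ lam hls m (bm.linn y (v j)) (v j)]
  refine Finset.sum_congr rfl fun u _ => ?_
  rw [act_linn dp bm ρ lam hlinn (tcoord u (dp.dH.comul m)) y (v j), bm_ls_sum]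

/-- Left action bundled as a linear map in the module variable. -/
def lsX (bm : Bimod A B X) (a : A) : X →ₗ[ℂ] X where
  toFun w := bm.ls a w
  map_add' w w' := bm.ls_add' a w w'
  map_smul' c w := by rw [bm.ls_smul']; rfl

@[simp] theorem lsX_apply (bm : Bimod A B X) (a : A) (w : X) : lsX bm a w = bm.ls a w := rfl

/-- The trilinear form `(p, q, r) ↦ (aλ p x)⟨·, aλ (τ q) w⟩-style` core map. -/
def m3bil (dp : HopfPairData H H0) (bm : Bimod A B X) (lam : X →ₗ[ℂ] X ⊗[ℂ] H0)
    (x w : X) : H →ₗ[ℂ] H →ₗ[ℂ] H →ₗ[ℂ] X :=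
  LinearMap.mk₂ ℂ (fun p q =>
    (lsX bm (bm.linn (coactAct dp lam p x)
      (coactAct dp lam (star (dp.dH.antipode q)) w))) ∘ₗ coactActH dp lam w)
    (fun p p' q => by
      refine LinearMap.ext fun r => ?_
      simp only [LinearMap.add_apply, LinearMap.comp_apply, lsX_apply, coactActH_apply]
      rw [coactAct_add, bm.linn_add_left, bm.ls_add])
    (fun c p q => by
      refine LinearMap.ext fun r => ?_
      simp only [LinearMap.smul_apply, LinearMap.comp_apply, lsX_apply, coactActH_apply]
      rw [coactAct_smul, bm.linn_smul_left, bm.ls_smul])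
    (fun p q q' => by
      refine LinearMap.ext fun r => ?_
      simp only [LinearMap.add_apply, LinearMap.comp_apply, lsX_apply, coactActH_apply]
      rw [map_add, star_add, coactAct_add, bm.linn_add_right, bm.ls_add])
    (fun c p q => by
      refine LinearMap.ext fun r => ?_
      simp only [LinearMap.smul_apply, LinearMap.comp_apply, lsX_apply, coactActH_apply]
      rw [map_smul, star_smul, coactAct_smul, bm.linn_smul_right, starRingEnd_apply,
        star_star, bm.ls_smul])

/-- The lifted trilinear map on `(H ⊗ H) ⊗ H`. -/
def m3map (dp : HopfPairData H H0) (bm : Bimod A B X) (lam : X →ₗ[ℂ] X ⊗[ℂ] H0)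
    (x w : X) : (H ⊗[ℂ] H) ⊗[ℂ] H →ₗ[ℂ] X :=
  TensorProduct.lift (TensorProduct.lift (m3bil dp bm lam x w))

theorem m3map_tmul (dp : HopfPairData H H0) (bm : Bimod A B X)
    (lam : X →ₗ[ℂ] X ⊗[ℂ] H0) (x w : X) (p q r : H) :
    m3map dp bm lam x w ((p ⊗ₜ[ℂ] q) ⊗ₜ[ℂ] r)
      = bm.ls (bm.linn (coactAct dp lam p x)
          (coactAct dp lam (star (dp.dH.antipode q)) w))
        (coactAct dp lam r w) := by
  rw [m3map, TensorProduct.lift.tmul, TensorProduct.lift.tmul]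
  rfl

/-- The lifted bilinear map on `H ⊗ H` (first slot specialized at `1`). -/
def rmap (dp : HopfPairData H H0) (bm : Bimod A B X) (lam : X →ₗ[ℂ] X ⊗[ℂ] H0)
    (x w : X) : H ⊗[ℂ] H →ₗ[ℂ] X :=
  TensorProduct.lift (m3bil dp bm lam x w 1)

theorem rmap_tmul (dp : HopfPairData H H0) (bm : Bimod A B X)
    (lam : X →ₗ[ℂ] X ⊗[ℂ] H0) (x w : X) (q r : H) :
    rmap dp bm lam x w (q ⊗ₜ[ℂ] r)
      = bm.ls (bm.linn (coactAct dp lam 1 x)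
          (coactAct dp lam (star (dp.dH.antipode q)) w))
        (coactAct dp lam r w) := by
  rw [rmap, TensorProduct.lift.tmul]
  rfl

theorem key_left (dp : HopfPairData H H0) (bm : Bimod A B X) (ρ : A →ₗ[ℂ] A ⊗[ℂ] H0)
    (lam : X →ₗ[ℂ] X ⊗[ℂ] H0)
    (hls : ∀ a x, lam (bm.ls a x) = tact bm.ls (ρ a) (lam x))
    (hlinn : ∀ x y, ρ (bm.linn x y) = tinnL bm.linn (lam x) (lam y))
    (hcounital : ∀ z, appRight dp.dH0.counit.toLinearMap (lam z) = z)
    (hcoassoc : ∀ z, TensorProduct.map lam LinearMap.id (lam z)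
        = (TensorProduct.assoc ℂ X H0 H0).symm
            (TensorProduct.map LinearMap.id dp.dH0.comul.toLinearMap (lam z)))
    {nl : ℕ} (v : Fin nl → X)
    (hv : ∀ x, ∑ j, bm.ls (bm.linn x (v j)) (v j) = x) (x : X) (k : H) :
    ∑ j, ∑ s, bm.ls
        (bm.linn x (coactAct dp lam
            (star (dp.dH.antipode (tcoord s (dp.dH.comul k)))) (v j)))
        (coactAct dp lam (Module.finBasis ℂ H s) (v j))
      = dp.dH.counit k • x := by
  have act1 : coactAct dp lam 1 x = x := coactAct_one dp lam hcounital x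
  -- the two elements of (H ⊗ H) ⊗ H
  set W : (H ⊗[ℂ] H) ⊗[ℂ] H := ∑ s, ∑ u, ∑ t,
    ((tcoord t (dp.dH.comul (tcoord u (dp.dH.comul (Module.finBasis ℂ H s))))
        * nuL dp (tcoord s (dp.dH.comul k))) ⊗ₜ[ℂ] Module.finBasis ℂ H t)
      ⊗ₜ[ℂ] Module.finBasis ℂ H u with hWdef
  set E : (H ⊗[ℂ] H) ⊗[ℂ] H :=
    ∑ s, ((1 : H) ⊗ₜ[ℂ] tcoord s (dp.dH.comul k)) ⊗ₜ[ℂ] Module.finBasis ℂ H s with hEdef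
  have hWE : W = E := by
    have hX1 : W = TensorProduct.map (TensorProduct.map (muNuL dp) LinearMap.id)
        LinearMap.id (∑ s, TensorProduct.map
          (TensorProduct.map (TensorProduct.mk ℂ H H (tcoord s (dp.dH.comul k)))
            LinearMap.id) LinearMap.id (comul2 dp.dH (Module.finBasis ℂ H s))) := by
      rw [map_sum, hWdef]
      refine Finset.sum_congr rfl fun s _ => ?_
      rw [comul2_expand dp (Module.finBasis ℂ H s), map_sum, map_sum]
      refine Finset.sum_congr rfl fun u _ => ?_
      rw [map_sum, map_sum]
      refine Finset.sum_congr rfl fun t _ => ?_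
      simp only [TensorProduct.map_tmul, LinearMap.id_coe, id_eq,
        TensorProduct.mk_apply, muNuL_tmul]
    have hE2 : TensorProduct.map (TensorProduct.map (muNuL dp) LinearMap.id)
        LinearMap.id (TensorProduct.map (comul2 dp.dH) LinearMap.id (dp.dH.comul k))
        = E := by
      conv_lhs => rw [comul_decomp dp k]
      rw [map_sum, map_sum, hEdef]
      refine Finset.sum_congr rfl fun s _ => ?_
      rw [TensorProduct.map_tmul, TensorProduct.map_tmul, muNu_comul2 dp]
      rfl
    rw [hX1, regroup dp k, hE2]
  -- the main chain
  have step1 : ∑ s, coactAct dp lam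
        (Module.finBasis ℂ H s * nuL dp (tcoord s (dp.dH.comul k))) x
      = dp.dH.counit k • x := by
    rw [← coactAct_sum dp lam x Finset.univ
      (fun s => Module.finBasis ℂ H s * nuL dp (tcoord s (dp.dH.comul k)))]
    have : ∑ s, Module.finBasis ℂ H s * nuL dp (tcoord s (dp.dH.comul k))
        = dp.dH.counit k • 1 := by
      simpa only [nuL_apply] using nu_contract dp k
    rw [this, coactAct_smul, act1]
  calc ∑ j, ∑ s, bm.ls
        (bm.linn x (coactAct dp lam
            (star (dp.dH.antipode (tcoord s (dp.dH.comul k)))) (v j)))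
        (coactAct dp lam (Module.finBasis ℂ H s) (v j))
      = ∑ j, m3map dp bm lam x (v j) E := by
        refine Finset.sum_congr rfl fun j _ => ?_
        rw [hEdef, map_sum]
        refine Finset.sum_congr rfl fun s _ => ?_
        rw [m3map_tmul, act1]
    _ = ∑ j, m3map dp bm lam x (v j) W := by rw [hWE]
    _ = ∑ j, ∑ s, ∑ u, ∑ t, bm.ls
          (bm.linn (coactAct dp lam
              (tcoord t (dp.dH.comul (tcoord u (dp.dH.comul (Module.finBasis ℂ H s))))
                * nuL dp (tcoord s (dp.dH.comul k))) x)
            (coactAct dp lam (star (dp.dH.antipode (Module.finBasis ℂ H t))) (v j)))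
          (coactAct dp lam (Module.finBasis ℂ H u) (v j)) := by
        refine Finset.sum_congr rfl fun j _ => ?_
        rw [hWdef]
        simp only [map_sum]
        exact Finset.sum_congr rfl fun s _ => Finset.sum_congr rfl fun u _ =>
          Finset.sum_congr rfl fun t _ => m3map_tmul dp bm lam x (v j) _ _ _
    _ = ∑ s, ∑ j, ∑ u, ∑ t, bm.ls
          (bm.linn (coactAct dp lam
              (tcoord t (dp.dH.comul (tcoord u (dp.dH.comul (Module.finBasis ℂ H s))))
                * nuL dp (tcoord s (dp.dH.comul k))) x)
            (coactAct dp lam (star (dp.dH.antipode (Module.finBasis ℂ H t))) (v j)))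
          (coactAct dp lam (Module.finBasis ℂ H u) (v j)) := Finset.sum_comm
    _ = ∑ s, ∑ j, ∑ u, ∑ t, bm.ls
          (bm.linn (coactAct dp lam
              (tcoord t (dp.dH.comul (tcoord u (dp.dH.comul (Module.finBasis ℂ H s)))))
              (coactAct dp lam (nuL dp (tcoord s (dp.dH.comul k))) x))
            (coactAct dp lam (star (dp.dH.antipode (Module.finBasis ℂ H t))) (v j)))
          (coactAct dp lam (Module.finBasis ℂ H u) (v j)) := by
        refine Finset.sum_congr rfl fun s _ => Finset.sum_congr rfl fun j _ =>
          Finset.sum_congr rfl fun u _ => Finset.sum_congr rfl fun t _ => ?_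
        rw [coactAct_mul dp lam hcoassoc]
    _ = ∑ s, coactAct dp lam (Module.finBasis ℂ H s)
          (coactAct dp lam (nuL dp (tcoord s (dp.dH.comul k))) x) := by
        refine Finset.sum_congr rfl fun s _ => ?_
        exact (star_c dp bm ρ lam hls hlinn v hv (Module.finBasis ℂ H s) _).symm
    _ = ∑ s, coactAct dp lam
          (Module.finBasis ℂ H s * nuL dp (tcoord s (dp.dH.comul k))) x := by
        refine Finset.sum_congr rfl fun s _ => ?_
        exact coactAct_mul dp lam hcoassoc _ _ _
    _ = dp.dH.counit k • x := step1

theorem key_left_R (dp : HopfPairData H H0) (bm : Bimod A B X) (ρ : A →ₗ[ℂ] A ⊗[ℂ] H0)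
    (lam : X →ₗ[ℂ] X ⊗[ℂ] H0)
    (hls : ∀ a x, lam (bm.ls a x) = tact bm.ls (ρ a) (lam x))
    (hlinn : ∀ x y, ρ (bm.linn x y) = tinnL bm.linn (lam x) (lam y))
    (hcounital : ∀ z, appRight dp.dH0.counit.toLinearMap (lam z) = z)
    (hcoassoc : ∀ z, TensorProduct.map lam LinearMap.id (lam z)
        = (TensorProduct.assoc ℂ X H0 H0).symm
            (TensorProduct.map LinearMap.id dp.dH0.comul.toLinearMap (lam z)))
    {nl : ℕ} (v : Fin nl → X)
    (hv : ∀ x, ∑ j, bm.ls (bm.linn x (v j)) (v j) = x) (x : X) (m : H) :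
    ∑ j, rmap dp bm lam x (v j) (dp.dH.comul m) = dp.dH.counit m • x := by
  rw [← key_left dp bm ρ lam hls hlinn hcounital hcoassoc v hv x m]
  refine Finset.sum_congr rfl fun j _ => ?_
  conv_lhs => rw [comul_decomp dp m]
  rw [map_sum]
  refine Finset.sum_congr rfl fun s _ => ?_
  rw [rmap_tmul, coactAct_one dp lam hcounital]

end AuxMain

section AuxOver
variable {E F Y : Type u} [AddCommGroup E] [Module ℂ E] [AddCommGroup F] [Module ℂ F]
  [AddCommGroup Y] [Module ℂ Y] {raE : RawCStarAlg E} {raF : RawCStarAlg F}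

theorem bmo_ls_sum (bmo : BimodOver raE raF Y) {ι : Type} (S : Finset ι) (g : ι → E)
    (y : Y) : bmo.ls (∑ i ∈ S, g i) y = ∑ i ∈ S, bmo.ls (g i) y :=
  map_sum (AddMonoidHom.mk' (fun e => bmo.ls e y) (fun a b => bmo.ls_add a b y)) g S

theorem bmo_linn_zero_left (bmo : BimodOver raE raF Y) (y : Y) : bmo.linn 0 y = 0 := by
  have h := bmo.linn_smul_left 0 0 y
  rw [zero_smul, zero_smul] at h
  exact h

theorem bmo_ls_zero (bmo : BimodOver raE raF Y) (y : Y) : bmo.ls 0 y = 0 := by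
  have h := bmo.ls_smul 0 0 y
  rw [zero_smul, zero_smul] at h
  exact h

theorem bmo_rinn_zero_right (bmo : BimodOver raE raF Y) (y : Y) : bmo.rinn y 0 = 0 := by
  have h := bmo.rinn_smul_right 0 y 0
  rw [zero_smul, zero_smul] at h
  exact h

theorem bmo_rs_zero (bmo : BimodOver raE raF Y) (y : Y) : bmo.rs y 0 = 0 := by
  have h := bmo.rs_smul 0 y 0
  rw [zero_smul, zero_smul] at h
  exact h

end AuxOver

/-- Let `(A, B, X, ρ, σ, λ, H0)` be a covariant system with `X` a Hilbert
`A`–`B` bimodule of finite type.  Then the crossed product `X ⋊_λ H` is a Hilbert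
`(A ⋊_ρ H)`–`(B ⋊_σ H)` bimodule of finite type, and its indices satisfy
`l-Ind[X ⋊_λ H] = l-Ind[X] ⋊_σ 1` and `r-Ind[X ⋊_λ H] = r-Ind[X] ⋊_ρ 1`; indeed for any
finite left (resp. right) basis `{v_j}` (resp. `{w_i}`) of `X`, the family `{v_j ⋊ 1}`
(resp. `{w_i ⋊ 1}`) is a finite left (resp. right) basis of `X ⋊_λ H` computing the
indices. -/
theorem crossed_product_bimodule_finite_type
    {H H0 : Type u} [CStarAlgebra H] [StarModule ℂ H] [FiniteDimensional ℂ H]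
    [CStarAlgebra H0] [StarModule ℂ H0] [FiniteDimensional ℂ H0]
    {A B X : Type u} [CStarAlgebra A] [StarModule ℂ A] [CStarAlgebra B] [StarModule ℂ B]
    [AddCommGroup X] [Module ℂ X]
    (dp : HopfPairData H H0)
    (ρ : A →ₗ[ℂ] A ⊗[ℂ] H0) (σ : B →ₗ[ℂ] B ⊗[ℂ] H0)
    (hρ : IsCoaction dp.dH0.comul.toLinearMap dp.dH0.counit.toLinearMap ρ)
    (hσ : IsCoaction dp.dH0.comul.toLinearMap dp.dH0.counit.toLinearMap σ)
    (bm : Bimod A B X) (hft : bm.FiniteType)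
    (lam : X →ₗ[ℂ] X ⊗[ℂ] H0)
    (hcov : IsCoactionBimod dp.dH0.comul.toLinearMap dp.dH0.counit.toLinearMap bm ρ σ lam)
    (caA : CrossedAlg dp ρ) (caB : CrossedAlg dp σ)
    (bmC : BimodOver caA.toRawCStarAlg caB.toRawCStarAlg (X ⊗[ℂ] H))
    (hchar : CrossedBimodChar dp bm ρ σ lam caA caB bmC) :
    bmC.FiniteType ∧
    (∀ (nl : ℕ) (v : Fin nl → X), (∀ x, ∑ j, bm.ls (bm.linn x (v j)) (v j) = x) →
      ((∀ ξ : X ⊗[ℂ] H,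
          ∑ j, bmC.ls (bmC.linn ξ ((v j) ⊗ₜ (1 : H))) ((v j) ⊗ₜ (1 : H)) = ξ) ∧
        ∑ j, bmC.rinn ((v j) ⊗ₜ (1 : H)) ((v j) ⊗ₜ (1 : H))
          = (∑ j, bm.rinn (v j) (v j)) ⊗ₜ (1 : H))) ∧
    (∀ (nr : ℕ) (w : Fin nr → X), (∀ x, ∑ i, bm.rs (w i) (bm.rinn (w i) x) = x) →
      ((∀ ξ : X ⊗[ℂ] H,
          ∑ i, bmC.rs ((w i) ⊗ₜ (1 : H)) (bmC.rinn ((w i) ⊗ₜ (1 : H)) ξ) = ξ) ∧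
        ∑ i, bmC.linn ((w i) ⊗ₜ (1 : H)) ((w i) ⊗ₜ (1 : H))
          = (∑ i, bm.linn (w i) (w i)) ⊗ₜ (1 : H))) := by
  classical
  have hΔ1 : dp.dH.comul (1 : H) = ∑ _i : Fin 1, (1 : H) ⊗ₜ[ℂ] (1 : H) := by
    simp [Algebra.TensorProduct.one_def]
  -- right inner product against (· ⊗ 1)
  have hrinn_tmul : ∀ (w x : X) (h : H),
      bmC.rinn (w ⊗ₜ[ℂ] (1 : H)) (x ⊗ₜ[ℂ] h) = bm.rinn w x ⊗ₜ[ℂ] h := by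
    intro w x h
    rw [hchar.rinn_char w x 1 h 1 (fun _ => 1) (fun _ => 1) hΔ1, Fin.sum_univ_one,
      star_one, one_mul, coactAct_one dp σ hσ.counital]
  have hrs_tmul : ∀ (w : X) (b : B) (h : H),
      bmC.rs (w ⊗ₜ[ℂ] (1 : H)) (b ⊗ₜ[ℂ] h) = bm.rs w b ⊗ₜ[ℂ] h := by
    intro w b h
    rw [hchar.rs_char w b 1 h 1 (fun _ => 1) (fun _ => 1) hΔ1, Fin.sum_univ_one,
      one_mul, coactAct_one dp σ hσ.counital]
  -- right basis property
  have right_all : ∀ {nr : ℕ} (w : Fin nr → X),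
      (∀ x, ∑ i, bm.rs (w i) (bm.rinn (w i) x) = x) →
      ∀ ξ : X ⊗[ℂ] H,
        ∑ i, bmC.rs ((w i) ⊗ₜ (1 : H)) (bmC.rinn ((w i) ⊗ₜ (1 : H)) ξ) = ξ := by
    intro nr w hw ξ
    induction ξ using TensorProduct.induction_on with
    | zero =>
        rw [Finset.sum_congr rfl fun i _ => by
          rw [bmo_rinn_zero_right bmC, bmo_rs_zero bmC]]
        exact Finset.sum_const_zero
    | tmul x h =>
        rw [Finset.sum_congr rfl fun i _ => by
          rw [hrinn_tmul (w i) x h, hrs_tmul (w i) (bm.rinn (w i) x) h]]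
        rw [← TensorProduct.sum_tmul, hw x]
    | add ξ₁ ξ₂ h₁ h₂ =>
        rw [Finset.sum_congr rfl fun i _ => by
          rw [bmC.rinn_add_right, bmC.rs_add]]
        rw [Finset.sum_add_distrib, h₁, h₂]
  -- the right index of the left basis
  have right_index : ∀ {nl : ℕ} (v : Fin nl → X),
      ∑ j, bmC.rinn ((v j) ⊗ₜ (1 : H)) ((v j) ⊗ₜ (1 : H))
        = (∑ j, bm.rinn (v j) (v j)) ⊗ₜ (1 : H) := by
    intro nl v
    rw [Finset.sum_congr rfl fun j _ => hrinn_tmul (v j) (v j) 1,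
      ← TensorProduct.sum_tmul]
  -- the left index of the right basis
  have left_index : ∀ {nr : ℕ} (w : Fin nr → X),
      ∑ i, bmC.linn ((w i) ⊗ₜ (1 : H)) ((w i) ⊗ₜ (1 : H))
        = (∑ i, bm.linn (w i) (w i)) ⊗ₜ (1 : H) := by
    intro nr w
    have : ∀ i, bmC.linn ((w i) ⊗ₜ[ℂ] (1 : H)) ((w i) ⊗ₜ[ℂ] (1 : H))
        = bm.linn (w i) (w i) ⊗ₜ[ℂ] (1 : H) := by
      intro i
      rw [hchar.linn_char (w i) (w i) 1 1 1 (fun _ => 1) (fun _ => 1) 1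
        (fun _ => 1) (fun _ => 1) hΔ1 hΔ1]
      simp only [Fin.sum_univ_one, star_one, mul_one, antipode_one dp]
      rw [coactAct_one dp lam hcov.counital]
    rw [Finset.sum_congr rfl fun i _ => this i, ← TensorProduct.sum_tmul]
  -- left basis property
  have left_tmul : ∀ {nl : ℕ} (v : Fin nl → X),
      (∀ x, ∑ j, bm.ls (bm.linn x (v j)) (v j) = x) →
      ∀ (x : X) (h : H),
        ∑ j, bmC.ls (bmC.linn (x ⊗ₜ[ℂ] h) ((v j) ⊗ₜ (1 : H))) ((v j) ⊗ₜ (1 : H))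
          = x ⊗ₜ[ℂ] h := by
    intro nl v hv x h
    have act1 : coactAct dp lam 1 x = x := coactAct_one dp lam hcov.counital x
    have stepA : ∀ j, bmC.linn (x ⊗ₜ[ℂ] h) ((v j) ⊗ₜ[ℂ] (1 : H))
        = ∑ s, bm.linn x (coactAct dp lam
            (star (dp.dH.antipode (tcoord s (dp.dH.comul h)))) (v j))
          ⊗ₜ[ℂ] Module.finBasis ℂ H s := by
      intro j
      rw [hchar.linn_char x (v j) h 1 _ (fun s => tcoord s (dp.dH.comul h))
        (fun s => Module.finBasis ℂ H s) 1 (fun _ => 1) (fun _ => 1)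
        (comul_decomp dp h) hΔ1]
      refine Finset.sum_congr rfl fun s _ => ?_
      rw [Fin.sum_univ_one, star_one, mul_one, mul_one]
    have stepB : ∀ j,
        bmC.ls (bmC.linn (x ⊗ₜ[ℂ] h) ((v j) ⊗ₜ[ℂ] (1 : H))) ((v j) ⊗ₜ[ℂ] (1 : H))
        = ∑ s, ∑ t, bm.ls
            (bm.linn x (coactAct dp lam
              (star (dp.dH.antipode (tcoord s (dp.dH.comul h)))) (v j)))
            (coactAct dp lam (tcoord t (dp.dH.comul (Module.finBasis ℂ H s))) (v j))
          ⊗ₜ[ℂ] Module.finBasis ℂ H t := by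
      intro j
      rw [stepA j, bmo_ls_sum bmC]
      refine Finset.sum_congr rfl fun s _ => ?_
      rw [hchar.ls_char _ (v j) (Module.finBasis ℂ H s) 1 _
        (fun t => tcoord t (dp.dH.comul (Module.finBasis ℂ H s)))
        (fun t => Module.finBasis ℂ H t) (comul_decomp dp (Module.finBasis ℂ H s))]
      exact Finset.sum_congr rfl fun t _ => by rw [mul_one]
    rw [Finset.sum_congr rfl fun j _ => stepB j]
    calc ∑ j, ∑ s, ∑ t, bm.ls
            (bm.linn x (coactAct dp lam
              (star (dp.dH.antipode (tcoord s (dp.dH.comul h)))) (v j)))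
            (coactAct dp lam (tcoord t (dp.dH.comul (Module.finBasis ℂ H s))) (v j))
          ⊗ₜ[ℂ] Module.finBasis ℂ H t
        = ∑ t, ∑ j, ∑ s, bm.ls
            (bm.linn x (coactAct dp lam
              (star (dp.dH.antipode (tcoord s (dp.dH.comul h)))) (v j)))
            (coactAct dp lam (tcoord t (dp.dH.comul (Module.finBasis ℂ H s))) (v j))
          ⊗ₜ[ℂ] Module.finBasis ℂ H t :=
          (Finset.sum_congr rfl fun j _ => Finset.sum_comm).trans Finset.sum_comm
      _ = ∑ t, (∑ j, rmap dp bm lam x (v j)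
            (∑ s, tcoord s (dp.dH.comul h) ⊗ₜ[ℂ]
              tcoord t (dp.dH.comul (Module.finBasis ℂ H s))))
          ⊗ₜ[ℂ] Module.finBasis ℂ H t := by
          refine Finset.sum_congr rfl fun t _ => ?_
          rw [TensorProduct.sum_tmul]
          refine Finset.sum_congr rfl fun j _ => ?_
          rw [map_sum, TensorProduct.sum_tmul]
          refine Finset.sum_congr rfl fun s _ => ?_
          rw [rmap_tmul, act1]
      _ = ∑ t, (dp.dH.counit (tcoord t (dp.dH.comul h)) • x)
            ⊗ₜ[ℂ] Module.finBasis ℂ H t := by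
          refine Finset.sum_congr rfl fun t _ => ?_
          rw [comul_slice dp h t, key_left_R dp bm ρ lam hcov.ls_compat
            hcov.linn_compat hcov.counital hcov.coassoc v hv x
            (tcoord t (dp.dH.comul h))]
      _ = x ⊗ₜ[ℂ] h := by
          rw [Finset.sum_congr rfl fun t _ => TensorProduct.smul_tmul _ _ _,
            ← TensorProduct.tmul_sum, counit_contract dp h]
  have left_all : ∀ {nl : ℕ} (v : Fin nl → X),
      (∀ x, ∑ j, bm.ls (bm.linn x (v j)) (v j) = x) →
      ∀ ξ : X ⊗[ℂ] H,
        ∑ j, bmC.ls (bmC.linn ξ ((v j) ⊗ₜ (1 : H))) ((v j) ⊗ₜ (1 : H)) = ξ := by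
    intro nl v hv ξ
    induction ξ using TensorProduct.induction_on with
    | zero =>
        rw [Finset.sum_congr rfl fun j _ => by
          rw [bmo_linn_zero_left bmC, bmo_ls_zero bmC]]
        exact Finset.sum_const_zero
    | tmul x h => exact left_tmul v hv x h
    | add ξ₁ ξ₂ h₁ h₂ =>
        rw [Finset.sum_congr rfl fun j _ => by
          rw [bmC.linn_add_left, bmC.ls_add]]
        rw [Finset.sum_add_distrib, h₁, h₂]
  obtain ⟨⟨nr, w, hw⟩, ⟨nl0, v0, hv0⟩⟩ := hft
  refine ⟨⟨⟨nr, fun i => (w i) ⊗ₜ (1 : H), right_all w hw⟩,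
    ⟨nl0, fun j => (v0 j) ⊗ₜ (1 : H), left_all v0 hv0⟩⟩, ?_, ?_⟩
  · intro nl v hv
    exact ⟨left_all v hv, right_index v⟩
  · intro nr' w' hw'
    exact ⟨right_all w' hw', left_index w'⟩

end SMEPaper
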